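/- arXiv:1406.6463 — 8 statements merged into one kernel-verified Lean document; each statement's English description precedes it below -/
import Mathlib

section
/- If Y is a random variable on the nonnegative integers with P(Y = j) = μ_j > 0 for all j and finite mean, then for every bounded function g: ℤ≥0 → ℝ, the expectation E[((j+1)μ_{j+1}/μ_j) g(Y+1) - Y g(Y)] equals 0. -/
/-- Stein identity from the ratio `(j+1) μ_{j+1} / μ_j`: for a `ℤ≥0`-valued random
variable `Y` with pmf `μ`, positive everywhere, with finite mean, and any bounded
`g`, `E[((Y+1) μ_{Y+1}/μ_Y) g(Y+1) - Y g(Y)] = 0`. -/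
theorem stein_operator_general_pmf (μ : ℕ → ℝ) (g : ℕ → ℝ)
    (hpos : ∀ j, 0 < μ j) (hsum : HasSum μ 1)
    (hmean : Summable (fun j : ℕ => (j : ℝ) * μ j))
    (hg : ∃ C, ∀ j, |g j| ≤ C) :
    ∑' j : ℕ, μ j * ((((j : ℝ) + 1) * μ (j + 1) / μ j) * g (j + 1) - (j : ℝ) * g j) = 0 := by
  obtain ⟨C, hC⟩ := hg
  set f : ℕ → ℝ := fun j => (j : ℝ) * μ j * g j with hf
  have hfs : Summable f := by
    apply Summable.of_abs
    refine Summable.of_nonneg_of_le (fun j => abs_nonneg _) ?_ (hmean.mul_right C)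
    intro j
    have h1 : |f j| = (j : ℝ) * μ j * |g j| := by
      rw [abs_mul, abs_mul, abs_of_nonneg (by positivity : (0:ℝ) ≤ (j:ℝ)),
        abs_of_nonneg (hpos j).le]
    rw [h1]
    exact mul_le_mul_of_nonneg_left (hC j) (mul_nonneg (Nat.cast_nonneg j) (hpos j).le)
  have hterm : ∀ j : ℕ,
      μ j * ((((j : ℝ) + 1) * μ (j + 1) / μ j) * g (j + 1) - (j : ℝ) * g j)
        = f (j + 1) - f j := by
    intro j
    have hne := (hpos j).ne'
    simp only [hf]
    push_cast
    field_simp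
  simp only [hterm]
  have hfs1 : Summable (fun j => f (j + 1)) := hfs.comp_injective (add_left_injective 1)
  rw [Summable.tsum_sub hfs1 hfs]
  have h0 : f 0 = 0 := by simp [hf]
  have := Summable.tsum_eq_zero_add hfs
  rw [h0, zero_add] at this
  rw [← this, sub_self]
end

section
/- Let Y₄ be a compound Poisson random variable with PGF exp(∑_{j≥1} λ_j (z^j - 1)), λ_j ≥ 0, ∑ j λ_j < ∞ and E Y₄ < ∞. Then for every bounded g: ℤ≥0 → ℝ, E[∑_{l=1}^∞ l λ_l g(Y₄ + l) - Y₄ g(Y₄)] = 0. -/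
open Filter Finset


lemma coeff_eq_zero_of_tsum_eq_zero (c : ℕ → ℝ) (hc : Summable fun k => |c k|)
    (h : ∀ x : ℝ, |x| ≤ 1/2 → ∑' k, c k * x ^ k = 0) : ∀ n, c n = 0 := by
  intro n
  induction n using Nat.strong_induction_on with
  | _ n IH =>
  have hM : Summable fun k => |c (n + 1 + k)| := by
    have := (summable_nat_add_iff (n + 1)).mpr hc
    exact this.congr fun k => by rw [add_comm k (n+1)]
  set M : ℝ := ∑' k, |c (n + 1 + k)| with hMdef
  have hM0 : 0 ≤ M := tsum_nonneg fun k => abs_nonneg _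
  have key : ∀ x : ℝ, 0 < x → x ≤ 1/2 → |c n| ≤ M * x := by
    intro x hx0 hx
    have hxabs : |x| ≤ 1/2 := by rw [abs_of_pos hx0]; exact hx
    have hx1 : |x| ≤ 1 := hxabs.trans (by norm_num)
    have hbound : ∀ m k : ℕ, ‖c m * x ^ k‖ ≤ |c m| := by
      intro m k
      rw [norm_mul, norm_pow]
      calc ‖c m‖ * ‖x‖ ^ k ≤ ‖c m‖ * 1 ^ k := by gcongr; exact hx1
        _ = |c m| := by simp
    have hs : Summable fun k => c k * x ^ k :=
      Summable.of_norm_bounded hc fun k => hbound k k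
    have hcn : Summable fun k => |c (n + k)| := by
      have := (summable_nat_add_iff n).mpr hc
      exact this.congr fun k => by rw [add_comm k n]
    have hs2 : Summable fun k => c (n + k) * x ^ k :=
      Summable.of_norm_bounded hcn fun k => hbound (n + k) k
    have h0 := h x hxabs
    rw [← Summable.sum_add_tsum_nat_add n hs] at h0
    have hsum0 : ∑ i ∈ range n, c i * x ^ i = 0 :=
      Finset.sum_eq_zero fun i hi => by rw [IH i (Finset.mem_range.mp hi), zero_mul]
    rw [hsum0, zero_add] at h0
    have hfac : ∀ k : ℕ, c (k + n) * x ^ (k + n) = x ^ n * (c (n + k) * x ^ k) := by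
      intro k; rw [add_comm k n, pow_add]; ring
    rw [tsum_congr hfac, tsum_mul_left] at h0
    have hxn : x ^ n ≠ 0 := pow_ne_zero n (ne_of_gt hx0)
    have h1 : ∑' k, c (n + k) * x ^ k = 0 := by
      rcases mul_eq_zero.mp h0 with h' | h'
      · exact absurd h' hxn
      · exact h'
    rw [Summable.tsum_eq_zero_add hs2] at h1
    simp only [pow_zero, add_zero, mul_one] at h1
    have hcn' : c n = - ∑' k, c (n + (k + 1)) * x ^ (k + 1) := by linarith
    have habs : |c n| ≤ ∑' k, |c (n + 1 + k)| * x ^ (k + 1) := by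
      rw [hcn', abs_neg]
      calc |∑' k, c (n + (k + 1)) * x ^ (k + 1)|
          ≤ ∑' k, ‖c (n + (k + 1)) * x ^ (k + 1)‖ := by
            rw [← Real.norm_eq_abs]
            apply norm_tsum_le_tsum_norm
            exact Summable.of_norm_bounded (by
              have := (summable_nat_add_iff 1).mpr hcn
              exact (this.congr fun k => by rw [add_comm k 1])) fun k => by
                have := hbound (n + (k+1)) (k+1)
                simpa [add_comm 1 k] using this
        _ = ∑' k, |c (n + 1 + k)| * x ^ (k + 1) := by
            apply tsum_congr; intro k
            rw [Real.norm_eq_abs, abs_mul, abs_pow, abs_of_pos hx0, add_assoc, add_comm 1 k]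
    have hfin : ∑' k, |c (n + 1 + k)| * x ^ (k + 1) ≤ M * x := by
      rw [hMdef, ← tsum_mul_right]
      apply Summable.tsum_le_tsum
      · intro k
        have : x ^ (k + 1) ≤ x := by
          calc x ^ (k+1) ≤ x ^ 1 := pow_le_pow_of_le_one (le_of_lt hx0) (hx.trans (by norm_num)) (by omega)
            _ = x := pow_one x
        exact mul_le_mul_of_nonneg_left this (abs_nonneg _)
      · apply Summable.of_nonneg_of_le (fun k => by positivity)
          (fun k => ?_) hM
        have : x ^ (k + 1) ≤ 1 := by
          apply pow_le_one₀ (le_of_lt hx0) (hx.trans (by norm_num))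
        calc |c (n+1+k)| * x ^ (k+1) ≤ |c (n+1+k)| * 1 :=
              mul_le_mul_of_nonneg_left this (abs_nonneg _)
          _ = |c (n+1+k)| := mul_one _
      · exact hM.mul_right x
    exact habs.trans hfin
  have : |c n| ≤ 0 := by
    have ht : Filter.Tendsto (fun k : ℕ => M * (1/2) ^ (k + 1)) atTop (nhds 0) := by
      have := tendsto_pow_atTop_nhds_zero_of_lt_one (by norm_num : (0:ℝ) ≤ 1/2) (by norm_num : (1/2:ℝ) < 1)
      have := (this.comp (tendsto_add_atTop_nat 1)).const_mul M
      simpa using this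
    apply ge_of_tendsto' ht
    intro k
    exact key ((1/2) ^ (k + 1)) (by positivity)
      (by calc ((1:ℝ)/2) ^ (k+1) ≤ (1/2) ^ 1 := pow_le_pow_of_le_one (by norm_num) (by norm_num) (by omega)
            _ = 1/2 := pow_one _)
  exact abs_eq_zero.mp (le_antisymm this (abs_nonneg _))


lemma summable_nat_mul_geom {r : ℝ} (hr0 : 0 ≤ r) (hr : r < 1) :
    Summable fun k : ℕ => (k : ℝ) * r ^ (k - 1) := by
  have h1 : Summable fun k : ℕ => (k : ℝ) * r ^ k := by
    have := summable_pow_mul_geometric_of_norm_lt_one 1 (r := r)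
      (by rwa [Real.norm_eq_abs, abs_of_nonneg hr0])
    simpa using this
  have h2 : Summable fun k : ℕ => r ^ k := summable_geometric_of_lt_one hr0 hr
  apply (summable_nat_add_iff 1).mp
  apply (h1.add h2).congr
  intro k
  push_cast [Nat.add_sub_cancel]
  ring

lemma hasDerivAt_tsum_pow (c : ℕ → ℝ) (hc : Summable fun k => |c k|) {x : ℝ} (hx : |x| < 1) :
    HasDerivAt (fun z : ℝ => ∑' k, c k * z ^ k) (∑' k, c k * ((k : ℝ) * x ^ (k - 1))) x ∧
      Summable fun k => c k * ((k : ℝ) * x ^ (k - 1)) := by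
  set r : ℝ := (|x| + 1) / 2 with hrdef
  have hxr : |x| < r := by rw [hrdef]; linarith
  have hr0 : 0 < r := lt_of_le_of_lt (abs_nonneg x) hxr
  have hr1 : r < 1 := by rw [hrdef]; linarith
  set S : ℝ := ∑' k, |c k| with hSdef
  have hcS : ∀ k, |c k| ≤ S := fun k => Summable.le_tsum hc k fun j _ => abs_nonneg _
  set u : ℕ → ℝ := fun k => S * ((k : ℝ) * r ^ (k - 1)) with hudef
  have hu : Summable u := (summable_nat_mul_geom hr0.le hr1).mul_left S
  have hbound : ∀ (k : ℕ) (y : ℝ), y ∈ Set.Ioo (-r) r → ‖c k * ((k : ℝ) * y ^ (k - 1))‖ ≤ u k := by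
    intro k y hy
    have hyr : |y| ≤ r := (abs_lt.mpr ⟨hy.1, hy.2⟩).le
    rw [Real.norm_eq_abs, abs_mul, abs_mul, abs_pow, Nat.abs_cast, hudef]
    have hS0 : 0 ≤ S := tsum_nonneg fun k => abs_nonneg _
    apply mul_le_mul (hcS k) ?_ (by positivity) hS0
    gcongr
  have hderiv : ∀ (k : ℕ) (y : ℝ), y ∈ Set.Ioo (-r) r →
      HasDerivAt (fun z : ℝ => c k * z ^ k) (c k * ((k : ℝ) * y ^ (k - 1))) y :=
    fun k y _ => (hasDerivAt_pow k y).const_mul (c k)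
  have h0mem : (0 : ℝ) ∈ Set.Ioo (-r) r := by constructor <;> [linarith; linarith]
  have hxmem : x ∈ Set.Ioo (-r) r := abs_lt.mp hxr
  have hg0 : Summable fun k => c k * (0 : ℝ) ^ k := by
    apply summable_of_ne_finset_zero (s := {0})
    intro k hk
    have : k ≠ 0 := by simpa using hk
    rw [zero_pow this, mul_zero]
  constructor
  · exact hasDerivAt_tsum_of_isPreconnected hu isOpen_Ioo (convex_Ioo _ _).isPreconnected
      hderiv hbound h0mem hg0 hxmem
  · exact Summable.of_norm_bounded hu fun k => hbound k x hxmem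

lemma summable_lam (lam : ℕ → ℝ) (hlam0 : lam 0 = 0) (hlam : ∀ j, 0 ≤ lam j)
    (hlamsum : Summable fun j : ℕ => (j : ℝ) * lam j) : Summable lam := by
  apply Summable.of_nonneg_of_le hlam (fun j => ?_) hlamsum
  rcases Nat.eq_zero_or_pos j with h | h
  · simp [h, hlam0]
  · have : (1 : ℝ) ≤ j := by exact_mod_cast h
    nlinarith [hlam j]

lemma hasDerivAt_tsum_lam (lam : ℕ → ℝ) (hlam0 : lam 0 = 0) (hlam : ∀ j, 0 ≤ lam j)
    (hlamsum : Summable fun j : ℕ => (j : ℝ) * lam j) {x : ℝ} (hx : |x| < 1) :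
    HasDerivAt (fun z : ℝ => ∑' j, lam j * (z ^ j - 1))
      (∑' j, lam j * ((j : ℝ) * x ^ (j - 1))) x ∧
      Summable fun j => lam j * ((j : ℝ) * x ^ (j - 1)) := by
  set u : ℕ → ℝ := fun j => (j : ℝ) * lam j with hudef
  have hbound : ∀ (j : ℕ) (y : ℝ), y ∈ Set.Ioo (-1 : ℝ) 1 →
      ‖lam j * ((j : ℝ) * y ^ (j - 1))‖ ≤ u j := by
    intro j y hy
    have hy1 : |y| ≤ 1 := (abs_lt.mpr ⟨hy.1, hy.2⟩).le
    rw [Real.norm_eq_abs, abs_mul, abs_mul, abs_pow, Nat.abs_cast, abs_of_nonneg (hlam j), hudef]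
    have : |y| ^ (j - 1) ≤ 1 := pow_le_one₀ (abs_nonneg y) hy1
    calc lam j * ((j:ℝ) * |y| ^ (j-1)) ≤ lam j * ((j:ℝ) * 1) := by
          gcongr
          exact hlam j
      _ = (j:ℝ) * lam j := by ring
  have hderiv : ∀ (j : ℕ) (y : ℝ), y ∈ Set.Ioo (-1 : ℝ) 1 →
      HasDerivAt (fun z : ℝ => lam j * (z ^ j - 1)) (lam j * ((j : ℝ) * y ^ (j - 1))) y :=
    fun j y _ => ((hasDerivAt_pow j y).sub_const 1).const_mul (lam j)
  have h0mem : (0 : ℝ) ∈ Set.Ioo (-1 : ℝ) 1 := by norm_num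
  have hxmem : x ∈ Set.Ioo (-1 : ℝ) 1 := abs_lt.mp hx
  have hg0 : Summable fun j => lam j * ((0 : ℝ) ^ j - 1) := by
    apply Summable.of_norm_bounded (summable_lam lam hlam0 hlam hlamsum)
    intro j
    rw [Real.norm_eq_abs, abs_mul, abs_of_nonneg (hlam j)]
    rcases Nat.eq_zero_or_pos j with h | h
    · simp [h, hlam0]
    · rw [zero_pow (by omega)]
      simp [hlam j]
  constructor
  · exact hasDerivAt_tsum_of_isPreconnected hlamsum isOpen_Ioo
      (convex_Ioo _ _).isPreconnected hderiv hbound h0mem hg0 hxmem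
  · exact Summable.of_norm_bounded hlamsum fun j => hbound j x hxmem

lemma tsum_shift (f : ℕ → ℝ) (hf : Summable f) (h0 : f 0 = 0) :
    ∑' k, f k = ∑' k, f (k + 1) := by
  rw [Summable.tsum_eq_zero_add hf, h0, zero_add]

set_option maxHeartbeats 1000000 in
theorem panjer (μ lam : ℕ → ℝ)
    (hlam0 : lam 0 = 0) (hlam : ∀ j, 0 ≤ lam j)
    (hlamsum : Summable (fun j : ℕ => (j : ℝ) * lam j))
    (hμ : ∀ j, 0 ≤ μ j)
    (hpgf : ∀ z : ℝ, |z| ≤ 1 →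
      ∑' k : ℕ, μ k * z ^ k = Real.exp (∑' j : ℕ, lam j * (z ^ j - 1)))
    (hmean : Summable (fun j : ℕ => (j : ℝ) * μ j)) :
    ∀ n : ℕ, ((n : ℝ) + 1) * μ (n + 1) =
      ∑ kl ∈ Finset.HasAntidiagonal.antidiagonal n, μ kl.1 * (((kl.2 : ℝ) + 1) * lam (kl.2 + 1)) := by
  -- μ is summable
  have hμs : Summable μ := by
    by_contra hns
    have h1 := hpgf 1 (by norm_num)
    simp only [one_pow, mul_one, sub_self, mul_zero, tsum_zero, Real.exp_zero] at h1
    rw [tsum_eq_zero_of_not_summable hns] at h1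
    norm_num at h1
  have habsμ : Summable fun k => |μ k| := hμs.congr fun k => (abs_of_nonneg (hμ k)).symm
  -- the shifted series a l = (l+1) λ_{l+1}
  set a : ℕ → ℝ := fun l => ((l : ℝ) + 1) * lam (l + 1) with hadef
  have ha : Summable a := by
    have := (summable_nat_add_iff 1).mpr hlamsum
    exact this.congr fun l => by push_cast; ring
  have ha0 : ∀ l, 0 ≤ a l := fun l => mul_nonneg (by positivity) (hlam _)
  have habsa : Summable fun l => |a l| := ha.congr fun l => (abs_of_nonneg (ha0 l)).symm
  -- shifted mean series
  have hs1 : Summable fun n : ℕ => ((n : ℝ) + 1) * μ (n + 1) := by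
    have := (summable_nat_add_iff 1).mpr hmean
    exact this.congr fun n => by push_cast; ring
  have hs1' : ∀ n : ℕ, 0 ≤ ((n : ℝ) + 1) * μ (n + 1) :=
    fun n => mul_nonneg (by positivity) (hμ _)
  set b : ℕ → ℝ := fun n => ∑ kl ∈ Finset.HasAntidiagonal.antidiagonal n, μ kl.1 * a kl.2 with hbdef
  have hbabs : Summable fun n => ‖b n‖ :=
    summable_norm_sum_mul_antidiagonal_of_summable_norm habsμ habsa
  have hb : Summable b := hbabs.of_norm
  -- coefficient sequence
  set c : ℕ → ℝ := fun n => ((n : ℝ) + 1) * μ (n + 1) - b n with hcdef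
  have hcabs : Summable fun n => |c n| := by
    apply Summable.of_nonneg_of_le (fun n => abs_nonneg _) (fun n => abs_sub _ _)
    exact ((hs1.congr fun n => (abs_of_nonneg (hs1' n)).symm).add hbabs)
  have hkey : ∀ x : ℝ, |x| ≤ 1/2 → ∑' n, c n * x ^ n = 0 := by
    intro x hx
    have hx1 : |x| < 1 := lt_of_le_of_lt hx (by norm_num)
    have hF := hasDerivAt_tsum_pow μ habsμ hx1
    have hG := hasDerivAt_tsum_lam lam hlam0 hlam hlamsum hx1
    -- F = exp ∘ G near x
    have heq : (fun z : ℝ => ∑' k, μ k * z ^ k) =ᶠ[nhds x]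
        fun z => Real.exp (∑' j, lam j * (z ^ j - 1)) := by
      have hopen : IsOpen {z : ℝ | |z| < 1} := isOpen_lt continuous_abs continuous_const
      filter_upwards [hopen.mem_nhds hx1] with z hz
      exact hpgf z (le_of_lt hz)
    have hFG : HasDerivAt (fun z : ℝ => ∑' k, μ k * z ^ k)
        (Real.exp (∑' j, lam j * (x ^ j - 1)) * ∑' j, lam j * ((j : ℝ) * x ^ (j - 1))) x := by
      have := (Real.hasDerivAt_exp (∑' j, lam j * (x ^ j - 1))).comp x hG.1
      exact this.congr_of_eventuallyEq heq
    have huniq := hF.1.unique hFG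
    rw [← hpgf x hx1.le] at huniq
    -- shift LHS
    have hL : ∑' k, μ k * ((k : ℝ) * x ^ (k - 1)) =
        ∑' n : ℕ, ((n : ℝ) + 1) * μ (n + 1) * x ^ n := by
      rw [tsum_shift _ hF.2 (by simp)]
      apply tsum_congr; intro n
      push_cast [Nat.add_sub_cancel]
      ring
    -- shift D
    have hD : ∑' j, lam j * ((j : ℝ) * x ^ (j - 1)) = ∑' l : ℕ, a l * x ^ l := by
      rw [tsum_shift _ hG.2 (by simp)]
      apply tsum_congr; intro l
      push_cast [Nat.add_sub_cancel, hadef]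
      ring
    -- Cauchy product
    have hfx : Summable fun k => ‖μ k * x ^ k‖ := by
      apply Summable.of_nonneg_of_le (fun k => norm_nonneg _) (fun k => ?_) habsμ
      rw [norm_mul, norm_pow]
      calc ‖μ k‖ * ‖x‖ ^ k ≤ ‖μ k‖ * 1 ^ k := by gcongr; exact hx1.le
        _ = |μ k| := by simp
    have hgx : Summable fun l => ‖a l * x ^ l‖ := by
      apply Summable.of_nonneg_of_le (fun k => norm_nonneg _) (fun k => ?_) habsa
      rw [norm_mul, norm_pow]
      calc ‖a k‖ * ‖x‖ ^ k ≤ ‖a k‖ * 1 ^ k := by gcongr; exact hx1.le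
        _ = |a k| := by simp
    have hcauchy : (∑' k : ℕ, μ k * x ^ k) * (∑' l : ℕ, a l * x ^ l) = ∑' n : ℕ, b n * x ^ n := by
      rw [Summable.tsum_mul_tsum_eq_tsum_sum_antidiagonal hfx.of_norm hgx.of_norm
        (summable_mul_of_summable_norm hfx hgx)]
      apply tsum_congr; intro n
      rw [hbdef, Finset.sum_mul]
      apply Finset.sum_congr rfl
      intro kl hkl
      have hn : kl.1 + kl.2 = n := Finset.HasAntidiagonal.mem_antidiagonal.mp hkl
      rw [← hn, pow_add]
      ring
    rw [hL, hD, hcauchy] at huniq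
    -- subtract
    have hsum1 : Summable fun n : ℕ => ((n : ℝ) + 1) * μ (n + 1) * x ^ n := by
      apply Summable.of_norm_bounded hs1
      intro n
      rw [norm_mul, norm_pow, Real.norm_eq_abs, abs_of_nonneg (hs1' n)]
      calc ((n:ℝ)+1) * μ (n+1) * |x| ^ n ≤ ((n:ℝ)+1) * μ (n+1) * 1 ^ n := by
            gcongr <;> first | exact hs1' n | exact hx1.le
        _ = ((n:ℝ)+1) * μ (n+1) := by simp
    have hsum2 : Summable fun n : ℕ => b n * x ^ n := by
      apply Summable.of_norm_bounded hbabs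
      intro n
      rw [norm_mul, norm_pow]
      calc ‖b n‖ * ‖x‖ ^ n ≤ ‖b n‖ * 1 ^ n := by gcongr; exact hx1.le
        _ = ‖b n‖ := by simp
    have : ∑' n : ℕ, c n * x ^ n =
        (∑' n : ℕ, ((n : ℝ) + 1) * μ (n + 1) * x ^ n) - ∑' n : ℕ, b n * x ^ n := by
      rw [← Summable.tsum_sub hsum1 hsum2]
      apply tsum_congr; intro n
      rw [hcdef]; ring
    rw [this, huniq, sub_self]
  have := coeff_eq_zero_of_tsum_eq_zero c hcabs hkey
  intro n
  have hn : ((n : ℝ) + 1) * μ (n + 1) - b n = 0 := this n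
  have hbn : b n = ∑ kl ∈ Finset.HasAntidiagonal.antidiagonal n, μ kl.1 * (((kl.2 : ℝ) + 1) * lam (kl.2 + 1)) :=
    rfl
  rw [← hbn]
  linarith

/-- Stein identity for the compound Poisson distribution: if `Y₄` has pmf `μ` with
PGF `exp (∑_{j≥1} λ_j (z^j - 1))`, `λ_j ≥ 0`, `∑ j λ_j < ∞`, finite mean, then for
bounded `g`, `E[∑_{l≥1} l λ_l g(Y₄ + l) - Y₄ g(Y₄)] = 0`. -/
theorem stein_operator_compound_poisson (μ lam : ℕ → ℝ)
    (hlam0 : lam 0 = 0) (hlam : ∀ j, 0 ≤ lam j)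
    (hlamsum : Summable (fun j : ℕ => (j : ℝ) * lam j))
    (hμ : ∀ j, 0 ≤ μ j)
    (hpgf : ∀ z : ℝ, |z| ≤ 1 →
      ∑' k : ℕ, μ k * z ^ k = Real.exp (∑' j : ℕ, lam j * (z ^ j - 1)))
    (hmean : Summable (fun j : ℕ => (j : ℝ) * μ j))
    (g : ℕ → ℝ) (hg : ∃ C, ∀ j, |g j| ≤ C) :
    ∑' j : ℕ, μ j *
      ((∑' l : ℕ, ((l : ℝ) + 1) * lam (l + 1) * g (j + l + 1)) - (j : ℝ) * g j) = 0 := by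
  obtain ⟨C, hC⟩ := hg
  have hC0 : 0 ≤ C := (abs_nonneg (g 0)).trans (hC 0)
  have hrec := panjer μ lam hlam0 hlam hlamsum hμ hpgf hmean
  -- summability facts
  have hμs : Summable μ := by
    by_contra hns
    have h1 := hpgf 1 (by norm_num)
    simp only [one_pow, mul_one, sub_self, mul_zero, tsum_zero, Real.exp_zero] at h1
    rw [tsum_eq_zero_of_not_summable hns] at h1
    norm_num at h1
  have habsμ : Summable fun k => |μ k| := hμs.congr fun k => (abs_of_nonneg (hμ k)).symm
  set a : ℕ → ℝ := fun l => ((l : ℝ) + 1) * lam (l + 1) with hadef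
  have ha : Summable a := by
    have := (summable_nat_add_iff 1).mpr hlamsum
    exact this.congr fun l => by push_cast; ring
  have ha0 : ∀ l, 0 ≤ a l := fun l => mul_nonneg (by positivity) (hlam _)
  have habsa : Summable fun l => |a l| := ha.congr fun l => (abs_of_nonneg (ha0 l)).symm
  set A : ℝ := ∑' l, a l with hAdef
  have hA0 : 0 ≤ A := tsum_nonneg ha0
  -- the double-indexed family
  set F2 : ℕ × ℕ → ℝ := fun p => μ p.1 * (a p.2 * g (p.1 + p.2 + 1)) with hF2def
  have hprod : Summable fun p : ℕ × ℕ => μ p.1 * a p.2 :=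
    summable_mul_of_summable_norm habsμ habsa
  have hF2 : Summable F2 := by
    apply Summable.of_norm_bounded (hprod.mul_right C)
    rintro ⟨j, l⟩
    rw [hF2def]
    simp only [Real.norm_eq_abs, abs_mul, abs_of_nonneg (hμ j), abs_of_nonneg (ha0 l)]
    calc μ j * (a l * |g (j + l + 1)|) ≤ μ j * (a l * C) :=
          mul_le_mul_of_nonneg_left (mul_le_mul_of_nonneg_left (hC _) (ha0 l)) (hμ j)
      _ = μ j * a l * C := by ring
  -- inner sums
  have hT : ∀ j : ℕ, Summable fun l => a l * g (j + l + 1) := by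
    intro j
    apply Summable.of_norm_bounded (ha.mul_right C)
    intro l
    rw [Real.norm_eq_abs, abs_mul, abs_of_nonneg (ha0 l)]
    exact mul_le_mul_of_nonneg_left (hC _) (ha0 l)
  have hTb : ∀ j : ℕ, |∑' l, a l * g (j + l + 1)| ≤ A * C := by
    intro j
    calc |∑' l, a l * g (j + l + 1)| ≤ ∑' l, ‖a l * g (j + l + 1)‖ := by
          rw [← Real.norm_eq_abs]
          exact norm_tsum_le_tsum_norm ((hT j).abs.congr fun l => (Real.norm_eq_abs _).symm)
      _ ≤ ∑' l, a l * C := by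
          apply Summable.tsum_le_tsum _ ((hT j).abs.congr fun l => (Real.norm_eq_abs _).symm)
            (ha.mul_right C)
          intro l
          rw [Real.norm_eq_abs, abs_mul, abs_of_nonneg (ha0 l)]
          exact mul_le_mul_of_nonneg_left (hC _) (ha0 l)
      _ = A * C := by rw [hAdef, tsum_mul_right]
  -- summability of the two parts
  have hS1 : Summable fun j : ℕ => μ j * ∑' l, a l * g (j + l + 1) := by
    apply Summable.of_norm_bounded (hμs.mul_right (A * C))
    intro j
    rw [Real.norm_eq_abs, abs_mul, abs_of_nonneg (hμ j)]
    exact mul_le_mul_of_nonneg_left (hTb j) (hμ j)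
  have hS2 : Summable fun j : ℕ => μ j * ((j : ℝ) * g j) := by
    apply Summable.of_norm_bounded (hmean.mul_right C)
    intro j
    rw [Real.norm_eq_abs, abs_mul, abs_of_nonneg (hμ j), abs_mul, Nat.abs_cast]
    calc μ j * ((j:ℝ) * |g j|) ≤ μ j * ((j:ℝ) * C) := by
          gcongr
          · exact hμ j
          · exact hC j
      _ = (j:ℝ) * μ j * C := by ring
  -- split the goal
  have hsplit : ∑' j : ℕ, μ j *
      ((∑' l : ℕ, ((l : ℝ) + 1) * lam (l + 1) * g (j + l + 1)) - (j : ℝ) * g j) =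
      (∑' j : ℕ, μ j * ∑' l, a l * g (j + l + 1)) - ∑' j : ℕ, μ j * ((j : ℝ) * g j) := by
    rw [← Summable.tsum_sub hS1 hS2]
    apply tsum_congr; intro j
    rw [hadef]
    ring
  rw [hsplit]
  -- rearrange the double sum
  have hleft : (∑' j : ℕ, μ j * ∑' l, a l * g (j + l + 1)) =
      ∑' n : ℕ, ((n : ℝ) + 1) * μ (n + 1) * g (n + 1) := by
    have h1 : (∑' j : ℕ, μ j * ∑' l, a l * g (j + l + 1)) = ∑' p : ℕ × ℕ, F2 p := by
      rw [Summable.tsum_prod' hF2 (fun j => (hT j).mul_left (μ j))]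
      apply tsum_congr; intro j
      simp only [hF2def]
      rw [tsum_mul_left]
    rw [h1, ← Finset.HasAntidiagonal.sigmaAntidiagonalEquivProd.tsum_eq F2]
    have h2 : ∑' x : Σ n : ℕ, Finset.HasAntidiagonal.antidiagonal n,
        F2 (Finset.HasAntidiagonal.sigmaAntidiagonalEquivProd x) =
        ∑' n : ℕ, ∑' kl : Finset.HasAntidiagonal.antidiagonal n, F2 kl.1 := by
      exact Summable.tsum_sigma' (fun n => (hasSum_fintype _).summable)
        (Finset.HasAntidiagonal.sigmaAntidiagonalEquivProd.summable_iff.mpr hF2)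
    rw [h2]
    apply tsum_congr; intro n
    rw [Finset.tsum_subtype]
    have h3 : ∑ kl ∈ Finset.HasAntidiagonal.antidiagonal n, F2 kl =
        (((n : ℝ) + 1) * μ (n + 1)) * g (n + 1) := by
      rw [hrec n, Finset.sum_mul]
      apply Finset.sum_congr rfl
      intro kl hkl
      have hn : kl.1 + kl.2 = n := Finset.HasAntidiagonal.mem_antidiagonal.mp hkl
      rw [hF2def]
      simp only
      rw [hn]
      ring
    rw [h3]
  have hright : (∑' j : ℕ, μ j * ((j : ℝ) * g j)) =
      ∑' n : ℕ, ((n : ℝ) + 1) * μ (n + 1) * g (n + 1) := by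
    rw [tsum_shift _ hS2 (by simp)]
    apply tsum_congr; intro n
    push_cast
    ring
  rw [hleft, hright, sub_self]
end

section
/- Let Y = Y₂ + Y₃ with Y₂ ~ Binomial(M, p) and Y₃ ~ NegativeBinomial(r, p̄) independent, and set μ_k = P(Y = k). Then for every k ∈ ℤ≥0 (with μ_{-1} := 0): μ_k (M p + r q q̄ - p k + q q̄ k) + μ_{k-1} (r p q̄ - M p q̄ + p q̄ (k-1)) - q (k+1) μ_{k+1} = 0, where q = 1 - p and q̄ = 1 - p̄. -/
/-- Recursion for the probabilities of the convolution of a binomial `Bi(M,p)` and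
an independent negative binomial `NB(r,p̄)` random variable:
`μ_k (Mp + rqq̄ - pk + qq̄k) + μ_{k-1} (rpq̄ - Mpq̄ + pq̄(k-1)) - q(k+1)μ_{k+1} = 0`,
with `μ_{-1} := 0`. -/
theorem binomial_negative_binomial_convolution_recursion
    (M : ℕ) (hM : 0 < M) (p q r pbar qbar : ℝ)
    (hp0 : 0 < p) (hp1 : p < 1) (hq : q = 1 - p)
    (hr : 0 < r) (hpb0 : 0 < pbar) (hpb1 : pbar < 1) (hqb : qbar = 1 - pbar)
    (μ : ℕ → ℝ)
    (hμ : ∀ k, μ k = ∑ i ∈ Finset.range (k + 1),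
      ((M.choose i : ℝ) * p ^ i * q ^ (M - i)) *
        (Real.Gamma (r + (k - i : ℕ)) / (Real.Gamma r * (Nat.factorial (k - i))) *
          pbar ^ r * qbar ^ (k - i))) :
    ∀ k : ℕ,
      μ k * ((M : ℝ) * p + r * q * qbar - p * k + q * qbar * k) +
        (if k = 0 then 0 else μ (k - 1)) *
          (r * p * qbar - (M : ℝ) * p * qbar + p * qbar * ((k : ℝ) - 1)) -
        q * ((k : ℝ) + 1) * μ (k + 1) = 0 := by
  -- binomial weight and negative-binomial weight
  set b : ℕ → ℝ := fun i => (M.choose i : ℝ) * p ^ i * q ^ (M - i) with hb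
  set g : ℕ → ℝ := fun j =>
    Real.Gamma (r + j) / (Real.Gamma r * (Nat.factorial j)) * pbar ^ r * qbar ^ j with hg
  have hμ' : ∀ k, μ k = ∑ i ∈ Finset.range (k + 1), b i * g (k - i) := by
    exact hμ
  set S : ℕ → ℝ := fun k => ∑ i ∈ Finset.range (k + 1), (i : ℝ) * (b i * g (k - i)) with hS
  have hΓr : Real.Gamma r ≠ 0 := (Real.Gamma_pos_of_pos hr).ne'
  -- binomial recursion
  have recB : ∀ i : ℕ, q * ((i : ℝ) + 1) * b (i + 1) = p * ((M : ℝ) - i) * b i := by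
    intro i
    rcases lt_or_ge i M with hi | hi
    · have hc : (M.choose (i + 1) : ℝ) * ((i : ℝ) + 1) = (M.choose i : ℝ) * ((M : ℝ) - i) := by
        have h := Nat.choose_succ_right_eq M i
        have h2 : ((M.choose (i + 1) * (i + 1) : ℕ) : ℝ) = ((M.choose i * (M - i) : ℕ) : ℝ) := by
          exact_mod_cast congrArg (Nat.cast : ℕ → ℝ) h
        rw [Nat.cast_mul, Nat.cast_mul, Nat.cast_sub hi.le] at h2
        push_cast at h2 ⊢
        linarith [h2]
      have hpow : q ^ (M - i) = q ^ (M - (i + 1)) * q := by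
        rw [← pow_succ]; congr 1; omega
      simp only [hb]
      rw [hpow]
      linear_combination (q * p ^ (i + 1) * q ^ (M - (i + 1))) * hc
    · have h1 : (M.choose (i + 1) : ℝ) = 0 := by
        simp [Nat.choose_eq_zero_of_lt (by omega : M < i + 1)]
      rcases hi.eq_or_lt with he | hlt
      · simp only [hb, h1, ← he]
        simp
      · have h2 : (M.choose i : ℝ) = 0 := by simp [Nat.choose_eq_zero_of_lt hlt]
        simp only [hb, h1, h2]
        ring
  -- negative binomial recursion
  have recN : ∀ j : ℕ, ((j : ℝ) + 1) * g (j + 1) = (r + j) * qbar * g j := by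
    intro j
    have hΓ : Real.Gamma (r + ((j : ℕ) + 1 : ℕ)) = (r + j) * Real.Gamma (r + j) := by
      push_cast
      rw [show r + ((j : ℝ) + 1) = (r + (j : ℝ)) + 1 by ring]
      exact Real.Gamma_add_one (by positivity)
    have hfac : ((Nat.factorial (j + 1) : ℕ) : ℝ) = ((j : ℝ) + 1) * (Nat.factorial j : ℝ) := by
      rw [Nat.factorial_succ]; push_cast; ring
    simp only [hg, hΓ, hfac, pow_succ]
    have hf0 : (Nat.factorial j : ℝ) ≠ 0 := by exact_mod_cast (Nat.factorial_pos j).ne'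
    field_simp
  have S0 : S 0 = 0 := by simp [hS]
  -- key sum identity 1
  have L2 : ∀ k : ℕ, q * S (k + 1) = p * M * μ k - p * S k := by
    intro k
    have e1 : q * S (k + 1) = ∑ i ∈ Finset.range (k + 1), p * ((M : ℝ) - i) * (b i * g (k - i)) := by
      rw [hS]
      simp only
      rw [Finset.mul_sum, Finset.sum_range_succ']
      simp only [Nat.cast_zero, zero_mul, mul_zero, add_zero, Nat.succ_sub_succ]
      refine Finset.sum_congr rfl fun i hi => ?_
      have h := recB i
      push_cast
      linear_combination (g (k - i)) * h
    rw [e1, hμ' k, hS]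
    simp only
    rw [Finset.mul_sum, Finset.mul_sum, ← Finset.sum_sub_distrib]
    refine Finset.sum_congr rfl fun i hi => ?_
    ring
  -- key sum identity 2
  have C0 : ∀ k : ℕ, ((k : ℝ) + 1) * μ (k + 1) - S (k + 1)
      = qbar * (r * μ k + ((k : ℝ) * μ k - S k)) := by
    intro k
    have e1 : ((k : ℝ) + 1) * μ (k + 1) - S (k + 1)
        = ∑ i ∈ Finset.range (k + 2), (((k : ℝ) + 1) - i) * (b i * g (k + 1 - i)) := by
      rw [hμ', hS]
      simp only
      rw [Finset.mul_sum, ← Finset.sum_sub_distrib]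
      refine Finset.sum_congr rfl fun i hi => ?_
      ring
    rw [e1, Finset.sum_range_succ]
    have hz : (((k : ℝ) + 1) - ((k + 1 : ℕ) : ℝ)) = 0 := by push_cast; ring
    rw [hz, zero_mul, add_zero]
    have e2 : ∀ i ∈ Finset.range (k + 1),
        (((k : ℝ) + 1) - i) * (b i * g (k + 1 - i))
          = (r + ((k : ℝ) - i)) * qbar * (b i * g (k - i)) := by
      intro i hi
      have hik : i ≤ k := by
        have := Finset.mem_range.mp hi; omega
      have h1 : k + 1 - i = (k - i) + 1 := by omega
      have h2 : ((k - i : ℕ) : ℝ) = (k : ℝ) - i := by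
        rw [Nat.cast_sub hik]
      have h := recN (k - i)
      rw [h2] at h
      rw [h1]
      linear_combination (b i) * h
    rw [Finset.sum_congr rfl e2, hμ' k, hS]
    simp only
    simp only [mul_add, mul_sub, ← mul_assoc, Finset.mul_sum]
    rw [← Finset.sum_sub_distrib, ← Finset.sum_add_distrib]
    refine Finset.sum_congr rfl fun i hi => ?_
    ring
  intro k
  cases k with
  | zero =>
      simp only [if_pos rfl, Nat.cast_zero]
      linear_combination (norm := (push_cast; ring_nf))
        (-q) * C0 0 - L2 0 + (q * qbar + p) * S0
  | succ m =>
      simp only [if_neg (Nat.succ_ne_zero m), Nat.add_sub_cancel]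
      linear_combination (norm := (push_cast; ring_nf))
        (-q) * C0 (m + 1) - L2 (m + 1) - p * C0 m + qbar * L2 m
end

section
/- Let Y = Y₂ + Y₃ with Y₂ ~ Binomial(M, p) and Y₃ ~ NegativeBinomial(r, p̄) independent. Then for every bounded g: ℤ≥0 → ℝ, E[(Mp + r q q̄ - p Y + q q̄ Y) g(Y+1) + (r q̄ p - M p q̄ + p q̄ Y) g(Y+2) - q Y g(Y)] = 0, where q = 1-p, q̄ = 1 - p̄. -/
open Finset

namespace SteinBNB

noncomputable def bb (M : ℕ) (p q : ℝ) (i : ℕ) : ℝ := (M.choose i : ℝ) * p ^ i * q ^ (M - i)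

noncomputable def nb (r pbar qbar : ℝ) (j : ℕ) : ℝ :=
  Real.Gamma (r + (j : ℝ)) / (Real.Gamma r * (Nat.factorial j : ℝ)) * pbar ^ r * qbar ^ j

noncomputable def ff (M : ℕ) (p q r pbar qbar : ℝ) (k : ℕ) : ℝ :=
  ∑ i ∈ range (k + 1), bb M p q i * nb r pbar qbar (k - i)

noncomputable def ss (M : ℕ) (p q r pbar qbar : ℝ) (k : ℕ) : ℝ :=
  ∑ i ∈ range (k + 1), (i : ℝ) * bb M p q i * nb r pbar qbar (k - i)

noncomputable def tt (M : ℕ) (p q r pbar qbar : ℝ) (k : ℕ) : ℝ :=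
  ∑ i ∈ range (k + 1), bb M p q i * (((k - i : ℕ) : ℝ) * nb r pbar qbar (k - i))

variable {M : ℕ} {p q r pbar qbar : ℝ}

lemma bb_rec (i : ℕ) :
    q * ((i : ℝ) + 1) * bb M p q (i + 1) = ((M : ℝ) - i) * p * bb M p q i := by
  rcases lt_or_ge i M with h | h
  · have hsub : M - i = (M - (i + 1)) + 1 := by omega
    have hchoose : (M.choose (i + 1) : ℝ) * ((i : ℝ) + 1) = (M.choose i : ℝ) * ((M : ℝ) - i) := by
      have hnat := Nat.choose_succ_right_eq M i
      have hc := congrArg (Nat.cast (R := ℝ)) hnat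
      push_cast [Nat.cast_sub h.le] at hc
      linarith [hc]
    unfold bb
    rw [hsub, pow_succ q (M - (i+1)), pow_succ p i]
    linear_combination (p ^ i * p * q ^ (M - (i + 1)) * q) * hchoose
  · have h1 : M.choose (i + 1) = 0 := Nat.choose_eq_zero_of_lt (by omega)
    rcases eq_or_lt_of_le h with rfl | h2
    · simp [bb, h1]
    · have h3 : M.choose i = 0 := Nat.choose_eq_zero_of_lt h2
      simp [bb, h1, h3]

lemma nb_rec (hr : 0 < r) (j : ℕ) :
    ((j : ℝ) + 1) * nb r pbar qbar (j + 1) = (r + j) * qbar * nb r pbar qbar j := by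
  have hrj : r + (j : ℝ) ≠ 0 := by positivity
  have h1 : Real.Gamma (r + ((j + 1 : ℕ) : ℝ)) = (r + j) * Real.Gamma (r + j) := by
    push_cast
    rw [show r + ((j : ℝ) + 1) = (r + (j : ℝ)) + 1 by ring, Real.Gamma_add_one hrj]
  have hΓ : Real.Gamma r ≠ 0 := ne_of_gt (Real.Gamma_pos_of_pos hr)
  have hf : ((Nat.factorial j : ℕ) : ℝ) ≠ 0 := by
    exact_mod_cast (Nat.factorial_pos j).ne'
  have h2 : ((Nat.factorial (j + 1) : ℕ) : ℝ) = ((j : ℝ) + 1) * (Nat.factorial j : ℝ) := by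
    push_cast [Nat.factorial_succ]; ring
  unfold nb
  rw [h1, h2, pow_succ]
  field_simp


lemma ss_succ (k : ℕ) :
    ss M p q r pbar qbar (k + 1) =
      ∑ i ∈ range (k + 1), ((i : ℝ) + 1) * bb M p q (i + 1) * nb r pbar qbar (k - i) := by
  unfold ss
  rw [Finset.sum_range_succ']
  simp only [Nat.cast_zero, zero_mul, add_zero]
  refine Finset.sum_congr rfl fun i hi => ?_
  rw [Nat.succ_sub_succ]
  push_cast
  ring

lemma lemA (k : ℕ) :
    (M : ℝ) * p * ff M p q r pbar qbar k =
      q * ss M p q r pbar qbar (k + 1) + p * ss M p q r pbar qbar k := by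
  rw [ss_succ]
  unfold ff ss
  rw [Finset.mul_sum, Finset.mul_sum, Finset.mul_sum, ← Finset.sum_add_distrib]
  refine Finset.sum_congr rfl fun i hi => ?_
  have h := bb_rec (M := M) (p := p) (q := q) i
  linear_combination (-(nb r pbar qbar (k - i))) * h

lemma lemT (hr : 0 < r) (k : ℕ) :
    tt M p q r pbar qbar (k + 1) =
      qbar * r * ff M p q r pbar qbar k + qbar * tt M p q r pbar qbar k := by
  unfold tt ff
  rw [Finset.sum_range_succ]
  simp only [Nat.sub_self, Nat.cast_zero, zero_mul, mul_zero, add_zero]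
  rw [Finset.mul_sum, Finset.mul_sum, ← Finset.sum_add_distrib]
  refine Finset.sum_congr rfl fun i hi => ?_
  have hik : i ≤ k := Nat.lt_succ_iff.mp (Finset.mem_range.mp hi)
  have hsub : k + 1 - i = (k - i) + 1 := by omega
  rw [hsub]
  have h := nb_rec (pbar := pbar) (qbar := qbar) hr (k - i)
  have hcast : (((k - i : ℕ) + 1 : ℕ) : ℝ) = ((k - i : ℕ) : ℝ) + 1 := by push_cast; ring
  rw [hcast]
  linear_combination (bb M p q i) * h

lemma kf (k : ℕ) :
    (k : ℝ) * ff M p q r pbar qbar k = ss M p q r pbar qbar k + tt M p q r pbar qbar k := by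
  unfold ff ss tt
  rw [Finset.mul_sum, ← Finset.sum_add_distrib]
  refine Finset.sum_congr rfl fun i hi => ?_
  have hik : i ≤ k := Nat.lt_succ_iff.mp (Finset.mem_range.mp hi)
  have hcast : ((k - i : ℕ) : ℝ) = (k : ℝ) - i := by
    push_cast [Nat.cast_sub hik]; ring
  rw [hcast]
  ring

lemma ss_zero : ss M p q r pbar qbar 0 = 0 := by simp [ss]

lemma star (hr : 0 < r) (k : ℕ) :
    q * ((k : ℝ) + 1) * ff M p q r pbar qbar (k + 1) =
      ((M : ℝ) * p + q * qbar * (r + k)) * ff M p q r pbar qbar k -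
        (p + q * qbar) * ss M p q r pbar qbar k := by
  have h1 := kf (M := M) (p := p) (q := q) (r := r) (pbar := pbar) (qbar := qbar) (k + 1)
  push_cast at h1
  have h2 := lemA (M := M) (p := p) (q := q) (r := r) (pbar := pbar) (qbar := qbar) k
  have h3 := lemT (M := M) (p := p) (q := q) (pbar := pbar) (qbar := qbar) hr k
  have h4 := kf (M := M) (p := p) (q := q) (r := r) (pbar := pbar) (qbar := qbar) k
  linear_combination q * h1 - h2 + q * h3 - q * qbar * h4

lemma lemC (hr : 0 < r) (k : ℕ) :
    (p + q * qbar) * ss M p q r pbar qbar (k + 1) =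
      p * ((k : ℝ) + 1) * ff M p q r pbar qbar (k + 1) -
        p * qbar * (r - M + k) * ff M p q r pbar qbar k := by
  have h1 := kf (M := M) (p := p) (q := q) (r := r) (pbar := pbar) (qbar := qbar) (k + 1)
  push_cast at h1
  have h2 := lemA (M := M) (p := p) (q := q) (r := r) (pbar := pbar) (qbar := qbar) k
  have h3 := lemT (M := M) (p := p) (q := q) (pbar := pbar) (qbar := qbar) hr k
  have h4 := kf (M := M) (p := p) (q := q) (r := r) (pbar := pbar) (qbar := qbar) k
  linear_combination (-p) * h1 - p * h3 + p * qbar * h4 - qbar * h2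

lemma point0 (hr : 0 < r) :
    q * ff M p q r pbar qbar 1 = ((M : ℝ) * p + r * q * qbar) * ff M p q r pbar qbar 0 := by
  have h := star (M := M) (p := p) (q := q) (pbar := pbar) (qbar := qbar) hr 0
  push_cast at h
  have h0 := ss_zero (M := M) (p := p) (q := q) (r := r) (pbar := pbar) (qbar := qbar)
  linear_combination h - (p + q * qbar) * h0

lemma pointS (hr : 0 < r) (k : ℕ) :
    q * ((k : ℝ) + 2) * ff M p q r pbar qbar (k + 2) =
      ((M : ℝ) * p + r * q * qbar - p * ((k : ℝ) + 1) + q * qbar * ((k : ℝ) + 1)) *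
          ff M p q r pbar qbar (k + 1) +
        (r * qbar * p - (M : ℝ) * p * qbar + p * qbar * k) * ff M p q r pbar qbar k := by
  have h1 := star (M := M) (p := p) (q := q) (pbar := pbar) (qbar := qbar) hr (k + 1)
  push_cast at h1
  have h2 := lemC (M := M) (p := p) (q := q) (pbar := pbar) (qbar := qbar) hr k
  linear_combination h1 - h2


lemma bb_nonneg (hp : 0 ≤ p) (hq : 0 ≤ q) (i : ℕ) : 0 ≤ bb M p q i :=
  mul_nonneg (mul_nonneg (Nat.cast_nonneg _) (pow_nonneg hp _)) (pow_nonneg hq _)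

lemma nb_nonneg (hr : 0 < r) (hpb : 0 ≤ pbar) (hqb : 0 ≤ qbar) (j : ℕ) :
    0 ≤ nb r pbar qbar j := by
  unfold nb
  have h1 : 0 < Real.Gamma (r + j) := Real.Gamma_pos_of_pos (by positivity)
  have h2 : 0 < Real.Gamma r := Real.Gamma_pos_of_pos hr
  have h3 : (0:ℝ) < Nat.factorial j := by exact_mod_cast Nat.factorial_pos j
  have h4 : (0:ℝ) ≤ pbar ^ r := Real.rpow_nonneg hpb r
  have h5 : (0:ℝ) ≤ qbar ^ j := pow_nonneg hqb j
  positivity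

lemma ff_nonneg (hp : 0 ≤ p) (hq : 0 ≤ q) (hr : 0 < r) (hpb : 0 ≤ pbar) (hqb : 0 ≤ qbar)
    (k : ℕ) : 0 ≤ ff M p q r pbar qbar k :=
  Finset.sum_nonneg fun i _ => mul_nonneg (bb_nonneg hp hq i) (nb_nonneg hr hpb hqb _)

lemma bb_summable : Summable (bb M p q) := by
  apply summable_of_ne_finset_zero (s := Finset.range (M + 1))
  intro i hi
  have : M < i := by simpa using Nat.lt_of_succ_le (Nat.not_lt.mp (fun h => hi (Finset.mem_range.mpr h)))
  simp [bb, Nat.choose_eq_zero_of_lt this]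

lemma ibb_summable : Summable (fun i : ℕ => (i : ℝ) * bb M p q i) := by
  apply summable_of_ne_finset_zero (s := Finset.range (M + 1))
  intro i hi
  have : M < i := by simpa using Nat.lt_of_succ_le (Nat.not_lt.mp (fun h => hi (Finset.mem_range.mpr h)))
  simp [bb, Nat.choose_eq_zero_of_lt this]

lemma nb1_summable (hr : 0 < r) (hpb0 : 0 < pbar) (hpb1 : pbar < 1) (hqb : qbar = 1 - pbar) :
    Summable (fun j : ℕ => ((j : ℝ) + 1) * nb r pbar qbar j) := by
  have hqb0 : 0 ≤ qbar := by rw [hqb]; linarith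
  have hqb1 : qbar < 1 := by rw [hqb]; linarith
  set l : ℝ := (1 + qbar) / 2 with hl
  have hd : 0 < l - qbar := by rw [hl]; linarith
  have hl1 : l < 1 := by rw [hl]; linarith
  apply summable_of_ratio_norm_eventually_le hl1
  rw [Filter.eventually_atTop]
  refine ⟨⌈(qbar * (r + 2) + 2 * qbar * r) / (l - qbar)⌉₊ + 1, fun j hj => ?_⟩
  have hnb0 := nb_nonneg hr hpb0.le hqb0 j
  have hnb1 := nb_nonneg hr hpb0.le hqb0 (j + 1)
  have hrec := nb_rec (pbar := pbar) (qbar := qbar) hr j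
  have hj1 : (1 : ℝ) ≤ (j : ℝ) := by
    have : 1 ≤ j := le_trans (Nat.le_add_left 1 _) hj
    exact_mod_cast this
  have hjc : (qbar * (r + 2) + 2 * qbar * r) / (l - qbar) ≤ (j : ℝ) := by
    calc (qbar * (r + 2) + 2 * qbar * r) / (l - qbar)
        ≤ (⌈(qbar * (r + 2) + 2 * qbar * r) / (l - qbar)⌉₊ : ℝ) := Nat.le_ceil _
      _ ≤ (j : ℝ) := by exact_mod_cast le_trans (Nat.le_add_right _ 1) hj
  have hdj : qbar * (r + 2) + 2 * qbar * r ≤ (l - qbar) * j := by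
    rw [div_le_iff₀ hd] at hjc; linarith
  have hkey : ((j : ℝ) + 2) * ((r + j) * qbar) ≤ l * (((j : ℝ) + 1) * ((j : ℝ) + 1)) := by
    nlinarith [mul_le_mul_of_nonneg_right hdj (by linarith : (0:ℝ) ≤ (j : ℝ)), hj1,
      mul_nonneg hqb0 hr.le]
  rw [Real.norm_of_nonneg (by positivity), Real.norm_of_nonneg (by positivity)]
  have hstep : ((j : ℝ) + 1 + 1) * nb r pbar qbar (j + 1)
      = ((j : ℝ) + 1 + 1) / ((j : ℝ) + 1) * (((j : ℝ) + 1) * nb r pbar qbar (j + 1)) := by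
    field_simp
  push_cast
  rw [hstep, hrec]
  rw [div_mul_eq_mul_div, div_le_iff₀ (by positivity)]
  calc ((j : ℝ) + 1 + 1) * ((r + j) * qbar * nb r pbar qbar j)
      = (((j : ℝ) + 2) * ((r + j) * qbar)) * nb r pbar qbar j := by ring
    _ ≤ (l * (((j : ℝ) + 1) * ((j : ℝ) + 1))) * nb r pbar qbar j :=
        mul_le_mul_of_nonneg_right hkey hnb0
    _ = l * (((j : ℝ) + 1) * nb r pbar qbar j) * ((j : ℝ) + 1) := by ring

lemma nb_summable (hr : 0 < r) (hpb0 : 0 < pbar) (hpb1 : pbar < 1) (hqb : qbar = 1 - pbar) :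
    Summable (nb r pbar qbar) := by
  have hqb0 : 0 ≤ qbar := by rw [hqb]; linarith
  refine Summable.of_nonneg_of_le (fun j => nb_nonneg hr hpb0.le hqb0 j)
    (fun j => ?_) (nb1_summable hr hpb0 hpb1 hqb)
  nlinarith [nb_nonneg hr hpb0.le hqb0 j, Nat.cast_nonneg (α := ℝ) j]

lemma jnb_summable (hr : 0 < r) (hpb0 : 0 < pbar) (hpb1 : pbar < 1) (hqb : qbar = 1 - pbar) :
    Summable (fun j : ℕ => (j : ℝ) * nb r pbar qbar j) := by
  have hqb0 : 0 ≤ qbar := by rw [hqb]; linarith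
  refine Summable.of_nonneg_of_le
    (fun j => mul_nonneg (Nat.cast_nonneg j) (nb_nonneg hr hpb0.le hqb0 j))
    (fun j => ?_) (nb1_summable hr hpb0 hpb1 hqb)
  nlinarith [nb_nonneg hr hpb0.le hqb0 j]


lemma norm_eq_self_of_nonneg {f : ℕ → ℝ} (h : ∀ x, 0 ≤ f x) : (fun x => ‖f x‖) = f :=
  funext fun x => Real.norm_of_nonneg (h x)

lemma ff_summable (hp0 : 0 ≤ p) (hq0 : 0 ≤ q) (hr : 0 < r) (hpb0 : 0 < pbar)
    (hpb1 : pbar < 1) (hqb : qbar = 1 - pbar) : Summable (ff M p q r pbar qbar) := by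
  have hqb0 : 0 ≤ qbar := by rw [hqb]; linarith
  have hb : Summable (bb M p q) := bb_summable
  have hn : Summable (nb r pbar qbar) := nb_summable hr hpb0 hpb1 hqb
  have := summable_sum_mul_range_of_summable_norm'
    (f := bb M p q) (g := nb r pbar qbar)
    (by rw [norm_eq_self_of_nonneg (bb_nonneg hp0 hq0)]; exact hb) hb
    (by rw [norm_eq_self_of_nonneg (nb_nonneg hr hpb0.le hqb0)]; exact hn) hn
  exact this

lemma ss_summable (hp0 : 0 ≤ p) (hq0 : 0 ≤ q) (hr : 0 < r) (hpb0 : 0 < pbar)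
    (hpb1 : pbar < 1) (hqb : qbar = 1 - pbar) : Summable (ss M p q r pbar qbar) := by
  have hqb0 : 0 ≤ qbar := by rw [hqb]; linarith
  have hb : Summable (fun i : ℕ => (i : ℝ) * bb M p q i) := ibb_summable
  have hn : Summable (nb r pbar qbar) := nb_summable hr hpb0 hpb1 hqb
  have := summable_sum_mul_range_of_summable_norm'
    (f := fun i : ℕ => (i : ℝ) * bb M p q i) (g := nb r pbar qbar)
    (by rw [norm_eq_self_of_nonneg
        (fun i => mul_nonneg (Nat.cast_nonneg i) (bb_nonneg hp0 hq0 i))]; exact hb) hb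
    (by rw [norm_eq_self_of_nonneg (nb_nonneg hr hpb0.le hqb0)]; exact hn) hn
  exact this

lemma tt_summable (hp0 : 0 ≤ p) (hq0 : 0 ≤ q) (hr : 0 < r) (hpb0 : 0 < pbar)
    (hpb1 : pbar < 1) (hqb : qbar = 1 - pbar) : Summable (tt M p q r pbar qbar) := by
  have hqb0 : 0 ≤ qbar := by rw [hqb]; linarith
  have hb : Summable (bb M p q) := bb_summable
  have hn : Summable (fun j : ℕ => (j : ℝ) * nb r pbar qbar j) := jnb_summable hr hpb0 hpb1 hqb
  have := summable_sum_mul_range_of_summable_norm'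
    (f := bb M p q) (g := fun j : ℕ => (j : ℝ) * nb r pbar qbar j)
    (by rw [norm_eq_self_of_nonneg (bb_nonneg hp0 hq0)]; exact hb) hb
    (by rw [norm_eq_self_of_nonneg
        (fun j => mul_nonneg (Nat.cast_nonneg j) (nb_nonneg hr hpb0.le hqb0 j))]; exact hn) hn
  exact this

lemma kff_summable (hp0 : 0 ≤ p) (hq0 : 0 ≤ q) (hr : 0 < r) (hpb0 : 0 < pbar)
    (hpb1 : pbar < 1) (hqb : qbar = 1 - pbar) :
    Summable (fun k : ℕ => (k : ℝ) * ff M p q r pbar qbar k) := by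
  have h : (fun k : ℕ => (k : ℝ) * ff M p q r pbar qbar k)
      = fun k => ss M p q r pbar qbar k + tt M p q r pbar qbar k := funext fun k => kf k
  rw [h]
  exact (ss_summable hp0 hq0 hr hpb0 hpb1 hqb).add (tt_summable hp0 hq0 hr hpb0 hpb1 hqb)

lemma summable_mul_poly {F φ : ℕ → ℝ} (hF0 : ∀ k, 0 ≤ F k) (h1 : Summable F)
    (h2 : Summable fun k : ℕ => (k : ℝ) * F k) {c0 c1 : ℝ}
    (hφ : ∀ k, |φ k| ≤ c0 + c1 * k) :
    Summable (fun k => F k * φ k) := by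
  refine Summable.of_abs ?_
  refine Summable.of_nonneg_of_le (fun k => abs_nonneg _) (fun k => ?_)
    ((h1.mul_left c0).add (h2.mul_left c1))
  rw [abs_mul, abs_of_nonneg (hF0 k)]
  nlinarith [mul_le_mul_of_nonneg_left (hφ k) (hF0 k)]

lemma abs_affine_mul_g_le {a b C : ℝ} {g : ℕ → ℝ} (hC : ∀ j, |g j| ≤ C) (k m : ℕ) :
    |(a + b * k) * g m| ≤ |a| * C + |b| * C * k := by
  have hC0 : 0 ≤ C := le_trans (abs_nonneg _) (hC 0)
  have h1 : |a + b * (k : ℝ)| ≤ |a| + |b| * k := by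
    calc |a + b * (k : ℝ)| ≤ |a| + |b * (k : ℝ)| := abs_add_le _ _
      _ = |a| + |b| * k := by rw [abs_mul, Nat.abs_cast]
  calc |(a + b * (k : ℝ)) * g m| = |a + b * (k : ℝ)| * |g m| := abs_mul _ _
    _ ≤ (|a| + |b| * (k : ℝ)) * C := mul_le_mul h1 (hC m) (abs_nonneg _) (by positivity)
    _ = |a| * C + |b| * C * k := by ring

lemma tsum_core {u v w : ℕ → ℝ} (hu : Summable u) (hv : Summable v) (hw : Summable w)
    (hw0 : w 0 = 0) (h0 : u 0 = w 1) (hs : ∀ k, u (k + 1) + v k = w (k + 2)) :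
    ∑' k, (u k + v k - w k) = 0 := by
  have hw1 : Summable (fun k : ℕ => w (k + 1)) := (summable_nat_add_iff 1).2 hw
  have hu1 : Summable (fun k : ℕ => u (k + 1)) := (summable_nat_add_iff 1).2 hu
  have hW : ∑' k : ℕ, w k = ∑' k : ℕ, w (k + 1) := by
    rw [Summable.tsum_eq_zero_add hw, hw0, zero_add]
  have hW1 : ∑' k : ℕ, w (k + 1) = w 1 + ∑' k : ℕ, w (k + 2) :=
    Summable.tsum_eq_zero_add hw1
  have hsum : ∑' k : ℕ, w (k + 2) = ∑' k : ℕ, (u (k + 1) + v k) :=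
    tsum_congr fun k => (hs k).symm
  have e1 : ∑' k : ℕ, (u k + v k - w k) = (∑' k : ℕ, u k + ∑' k : ℕ, v k) - ∑' k : ℕ, w k := by
    rw [Summable.tsum_sub (hu.add hv) hw, Summable.tsum_add hu hv]
  have e2 : ∑' k : ℕ, w k = w 1 + (∑' k : ℕ, u (k + 1) + ∑' k : ℕ, v k) := by
    rw [hW, hW1, hsum, Summable.tsum_add hu1 hv]
  have e3 : ∑' k : ℕ, u k = u 0 + ∑' k : ℕ, u (k + 1) := Summable.tsum_eq_zero_add hu
  rw [e1, e2, e3, h0]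
  ring

end SteinBNB

open SteinBNB in
/-- Stein identity for the convolution `Y = Y₂ + Y₃` of a binomial `Bi(M,p)` and an
independent negative binomial `NB(r,p̄)`: for every bounded `g`,
`E[(Mp + rqq̄ - pY + qq̄Y) g(Y+1) + (rq̄p - Mpq̄ + pq̄Y) g(Y+2) - qY g(Y)] = 0`. -/
theorem stein_operator_binomial_negative_binomial_convolution
    (M : ℕ) (hM : 0 < M) (p q r pbar qbar : ℝ)
    (hp0 : 0 < p) (hp1 : p < 1) (hq : q = 1 - p)
    (hr : 0 < r) (hpb0 : 0 < pbar) (hpb1 : pbar < 1) (hqb : qbar = 1 - pbar)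
    (g : ℕ → ℝ) (hg : ∃ C, ∀ j, |g j| ≤ C) :
    ∑' k : ℕ,
      (∑ i ∈ Finset.range (k + 1),
        ((M.choose i : ℝ) * p ^ i * q ^ (M - i)) *
          (Real.Gamma (r + (k - i : ℕ)) / (Real.Gamma r * (Nat.factorial (k - i))) *
            pbar ^ r * qbar ^ (k - i))) *
      (((M : ℝ) * p + r * q * qbar - p * k + q * qbar * k) * g (k + 1) +
        (r * qbar * p - (M : ℝ) * p * qbar + p * qbar * k) * g (k + 2) -
        q * (k : ℝ) * g k) = 0 := by
  obtain ⟨C, hC⟩ := hg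
  have hq0 : 0 ≤ q := by rw [hq]; linarith
  have key : ∀ k : ℕ,
      (∑ i ∈ Finset.range (k + 1),
        ((M.choose i : ℝ) * p ^ i * q ^ (M - i)) *
          (Real.Gamma (r + (k - i : ℕ)) / (Real.Gamma r * (Nat.factorial (k - i))) *
            pbar ^ r * qbar ^ (k - i))) = ff M p q r pbar qbar k := fun k => rfl
  simp only [key]
  have hF0 : ∀ k, 0 ≤ ff M p q r pbar qbar k := fun k => by
    have hqb0 : 0 ≤ qbar := by rw [hqb]; linarith
    exact ff_nonneg hp0.le hq0 hr hpb0.le hqb0 k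
  have hFs : Summable (ff M p q r pbar qbar) := ff_summable hp0.le hq0 hr hpb0 hpb1 hqb
  have hkFs : Summable (fun k : ℕ => (k : ℝ) * ff M p q r pbar qbar k) :=
    kff_summable hp0.le hq0 hr hpb0 hpb1 hqb
  -- the three summands
  have hu : Summable (fun k : ℕ => ff M p q r pbar qbar k *
      (((M : ℝ) * p + r * q * qbar - p * k + q * qbar * k) * g (k + 1))) := by
    refine summable_mul_poly hF0 hFs hkFs
      (c0 := |(M : ℝ) * p + r * q * qbar| * C) (c1 := |q * qbar - p| * C) (fun k => ?_)
    have h := abs_affine_mul_g_le (a := (M : ℝ) * p + r * q * qbar) (b := q * qbar - p)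
      hC k (k + 1)
    calc |((M : ℝ) * p + r * q * qbar - p * k + q * qbar * k) * g (k + 1)|
        = |(((M : ℝ) * p + r * q * qbar) + (q * qbar - p) * k) * g (k + 1)| := by ring_nf
      _ ≤ _ := h
  have hv : Summable (fun k : ℕ => ff M p q r pbar qbar k *
      ((r * qbar * p - (M : ℝ) * p * qbar + p * qbar * k) * g (k + 2))) := by
    refine summable_mul_poly hF0 hFs hkFs
      (c0 := |r * qbar * p - (M : ℝ) * p * qbar| * C) (c1 := |p * qbar| * C) (fun k => ?_)
    have h := abs_affine_mul_g_le (a := r * qbar * p - (M : ℝ) * p * qbar) (b := p * qbar)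
      hC k (k + 2)
    calc |(r * qbar * p - (M : ℝ) * p * qbar + p * qbar * k) * g (k + 2)|
        = |((r * qbar * p - (M : ℝ) * p * qbar) + (p * qbar) * k) * g (k + 2)| := by ring_nf
      _ ≤ _ := h
  have hw : Summable (fun k : ℕ => ff M p q r pbar qbar k * (q * k * g k)) := by
    refine summable_mul_poly hF0 hFs hkFs
      (c0 := |(0 : ℝ)| * C) (c1 := |q| * C) (fun k => ?_)
    have h := abs_affine_mul_g_le (a := (0 : ℝ)) (b := q) hC k k
    calc |q * (k : ℝ) * g k| = |((0 : ℝ) + q * k) * g k| := by ring_nf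
      _ ≤ _ := h
  have hw0 : ff M p q r pbar qbar 0 * (q * (0 : ℕ) * g 0) = 0 := by
    simp
  have h0 : ff M p q r pbar qbar 0 *
      (((M : ℝ) * p + r * q * qbar - p * (0 : ℕ) + q * qbar * (0 : ℕ)) * g (0 + 1))
      = ff M p q r pbar qbar 1 * (q * (1 : ℕ) * g 1) := by
    have h := point0 (M := M) (p := p) (q := q) (pbar := pbar) (qbar := qbar) hr
    push_cast
    linear_combination (-g 1) * h
  have hs : ∀ k : ℕ, ff M p q r pbar qbar (k + 1) *
        (((M : ℝ) * p + r * q * qbar - p * (k + 1 : ℕ) + q * qbar * (k + 1 : ℕ)) * g (k + 1 + 1))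
      + ff M p q r pbar qbar k *
        ((r * qbar * p - (M : ℝ) * p * qbar + p * qbar * k) * g (k + 2))
      = ff M p q r pbar qbar (k + 2) * (q * (k + 2 : ℕ) * g (k + 2)) := by
    intro k
    have h := pointS (M := M) (p := p) (q := q) (pbar := pbar) (qbar := qbar) hr k
    push_cast
    linear_combination (-g (k + 2)) * h
  have main := tsum_core hu hv hw hw0 h0 hs
  calc ∑' k : ℕ, ff M p q r pbar qbar k *
        (((M : ℝ) * p + r * q * qbar - p * k + q * qbar * k) * g (k + 1) +
          (r * qbar * p - (M : ℝ) * p * qbar + p * qbar * k) * g (k + 2) -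
          q * (k : ℝ) * g k)
      = ∑' k : ℕ, (ff M p q r pbar qbar k *
          (((M : ℝ) * p + r * q * qbar - p * k + q * qbar * k) * g (k + 1)) +
        ff M p q r pbar qbar k *
          ((r * qbar * p - (M : ℝ) * p * qbar + p * qbar * k) * g (k + 2)) -
        ff M p q r pbar qbar k * (q * k * g k)) := tsum_congr fun k => by ring
    _ = 0 := main
end

section
/- Let N be a ℤ≥0-valued random variable with P(N=k) = μ_k, X₁, X₂, ... i.i.d. ℤ≥0-valued with P(X₁ = k) = p_k, independent of N, and S_N = ∑_{j=1}^N X_j with E S_N < ∞. Writing p_{k,s} = P(X₁+...+X_k = s), the recursion (s+1) ∑_{k=0}^∞ μ_k p_{k,s+1} = ∑_{k=0}^∞ (k+1) μ_{k+1} ∑_{m=0}^{s} p_{k,m} (s-m+1) p_{s-m+1} holds for every s ∈ ℤ≥0. -/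
/-- `convPow p k` is the `k`-fold convolution of the pmf `p` on `ℤ≥0`
(`convPow p 0` is the point mass at `0`). -/
def convPow (p : ℕ → ℝ) : ℕ → ℕ → ℝ
  | 0, s => if s = 0 then 1 else 0
  | k + 1, s => ∑ m ∈ Finset.range (s + 1), convPow p k m * p (s - m)

lemma tri_swap (g : ℕ → ℕ → ℕ → ℝ) (s : ℕ) :
    ∑ m ∈ Finset.range (s+1), ∑ j ∈ Finset.range (m+1), g j (m-j) (s-m)
    = ∑ m ∈ Finset.range (s+1), ∑ j ∈ Finset.range (m+1), g j (s-m) (m-j) := by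
  rw [← Finset.sum_sigma (Finset.range (s+1)) (fun m => Finset.range (m+1))
      (fun x => g x.2 (x.1 - x.2) (s - x.1)),
    ← Finset.sum_sigma (Finset.range (s+1)) (fun m => Finset.range (m+1))
      (fun x => g x.2 (s - x.1) (x.1 - x.2))]
  refine Finset.sum_nbij' (fun x => ⟨s - x.1 + x.2, x.2⟩) (fun x => ⟨s - x.1 + x.2, x.2⟩)
    ?_ ?_ ?_ ?_ ?_
  · rintro ⟨m, j⟩ h
    simp only [Finset.mem_sigma, Finset.mem_range] at h ⊢
    omega
  · rintro ⟨m, j⟩ h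
    simp only [Finset.mem_sigma, Finset.mem_range] at h ⊢
    omega
  · rintro ⟨m, j⟩ h
    simp only [Finset.mem_sigma, Finset.mem_range] at h
    simp only [Sigma.mk.inj_iff, heq_eq_eq]
    exact ⟨by omega, trivial⟩
  · rintro ⟨m, j⟩ h
    simp only [Finset.mem_sigma, Finset.mem_range] at h
    simp only [Sigma.mk.inj_iff, heq_eq_eq]
    exact ⟨by omega, trivial⟩
  · rintro ⟨m, j⟩ h
    simp only [Finset.mem_sigma, Finset.mem_range] at h
    have h1 : s - m + j - j = s - m := by omega
    have h2 : s - (s - m + j) = m - j := by omega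
    simp [h1, h2]

lemma convPow_nonneg (p : ℕ → ℝ) (hp0 : ∀ k, 0 ≤ p k) : ∀ k s, 0 ≤ convPow p k s
  | 0, s => by rw [convPow]; split <;> norm_num
  | k + 1, s => by
      rw [convPow]
      exact Finset.sum_nonneg fun m _ => mul_nonneg (convPow_nonneg p hp0 k m) (hp0 _)

lemma convPow_le_one (p : ℕ → ℝ) (hp0 : ∀ k, 0 ≤ p k) (hp1 : HasSum p 1) :
    ∀ k s, convPow p k s ≤ 1
  | 0, s => by rw [convPow]; split <;> norm_num
  | k + 1, s => by
      rw [convPow]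
      calc ∑ m ∈ Finset.range (s + 1), convPow p k m * p (s - m)
          ≤ ∑ m ∈ Finset.range (s + 1), 1 * p (s - m) := by
            refine Finset.sum_le_sum fun m _ => ?_
            exact mul_le_mul_of_nonneg_right (convPow_le_one p hp0 hp1 k m) (hp0 _)
        _ = ∑ m ∈ Finset.range (s + 1), p m := by
            simp only [one_mul]
            exact Finset.sum_range_reflect (fun t => p t) (s + 1)
        _ ≤ 1 := by
            have := Summable.sum_le_tsum (Finset.range (s + 1)) (fun i _ => hp0 i) hp1.summable
            rwa [hp1.tsum_eq] at this

lemma convPow_key (p : ℕ → ℝ) : ∀ (k s : ℕ), (s : ℝ) * convPow p (k + 1) s =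
    ((k : ℝ) + 1) * ∑ m ∈ Finset.range (s + 1),
      convPow p k m * ((s - m : ℕ) : ℝ) * p (s - m) := by
  intro k
  induction k with
  | zero =>
    intro s
    have h1 : convPow p 1 s = p s := by
      rw [convPow]
      rw [Finset.sum_eq_single 0]
      · simp [convPow]
      · intro b _ hb; simp [convPow, hb]
      · intro h; simp at h
    have h2 : ∑ m ∈ Finset.range (s + 1), convPow p 0 m * ((s - m : ℕ) : ℝ) * p (s - m)
        = (s : ℝ) * p s := by
      rw [Finset.sum_eq_single 0]
      · simp [convPow]
      · intro b _ hb; simp [convPow, hb]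
      · intro h; simp at h
    rw [h1, h2]; push_cast; ring
  | succ k ih =>
    intro s
    set A := convPow p
    have expand : (s : ℝ) * convPow p (k + 1 + 1) s =
        ∑ m ∈ Finset.range (s + 1), ((m : ℝ) * A (k + 1) m) * p (s - m) +
        ∑ m ∈ Finset.range (s + 1), A (k + 1) m * ((s - m : ℕ) : ℝ) * p (s - m) := by
      rw [convPow, Finset.mul_sum, ← Finset.sum_add_distrib]
      refine Finset.sum_congr rfl fun m hm => ?_
      have hm' : m ≤ s := Nat.lt_succ_iff.mp (Finset.mem_range.mp hm)
      have hc : ((s - m : ℕ) : ℝ) = (s : ℝ) - m := by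
        rw [Nat.cast_sub hm']
      rw [hc]; ring
    have step1 : ∑ m ∈ Finset.range (s + 1), ((m : ℝ) * A (k + 1) m) * p (s - m) =
        ((k : ℝ) + 1) * ∑ m ∈ Finset.range (s + 1), ∑ j ∈ Finset.range (m + 1),
          A k j * ((m - j : ℕ) : ℝ) * p (m - j) * p (s - m) := by
      rw [Finset.mul_sum]
      refine Finset.sum_congr rfl fun m _ => ?_
      rw [ih m, mul_assoc, Finset.sum_mul]
    have swap := tri_swap (fun j a b => A k j * (a : ℝ) * p a * p b) s
    have step2 : ∑ m ∈ Finset.range (s + 1), ∑ j ∈ Finset.range (m + 1),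
          A k j * ((s - m : ℕ) : ℝ) * p (s - m) * p (m - j) =
        ∑ m ∈ Finset.range (s + 1), A (k + 1) m * ((s - m : ℕ) : ℝ) * p (s - m) := by
      refine Finset.sum_congr rfl fun m _ => ?_
      show _ = convPow p (k + 1) m * ((s - m : ℕ) : ℝ) * p (s - m)
      rw [convPow, Finset.sum_mul, Finset.sum_mul]
      refine Finset.sum_congr rfl fun j _ => ?_
      ring
    rw [expand, step1, swap, step2]
    push_cast
    ring

/-- Recursion (25) for compound distributions: with `N` having pmf `μ`, i.i.d.
summands with pmf `p`, `p_{k,·} = convPow p k`, and `E S_N < ∞`,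
`(s+1) ∑_k μ_k p_{k,s+1} = ∑_k (k+1) μ_{k+1} ∑_{m=0}^s p_{k,m} (s-m+1) p_{s-m+1}`. -/
theorem compound_distribution_recursion (μ p : ℕ → ℝ)
    (hμ0 : ∀ k, 0 ≤ μ k) (hμ1 : HasSum μ 1)
    (hp0 : ∀ k, 0 ≤ p k) (hp1 : HasSum p 1)
    (hmean : Summable (fun s : ℕ => (s : ℝ) * ∑' k : ℕ, μ k * convPow p k s)) :
    ∀ s : ℕ, ((s : ℝ) + 1) * ∑' k : ℕ, μ k * convPow p k (s + 1) =
      ∑' k : ℕ, ((k : ℝ) + 1) * μ (k + 1) *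
        ∑ m ∈ Finset.range (s + 1),
          convPow p k m * ((s - m : ℕ) + 1 : ℝ) * p (s - m + 1) := by
  intro s
  have hA0 : ∀ k t, 0 ≤ convPow p k t := convPow_nonneg p hp0
  have hA1 : ∀ k t, convPow p k t ≤ 1 := convPow_le_one p hp0 hp1
  have hsum : Summable (fun k => μ k * convPow p k (s + 1)) := by
    refine Summable.of_nonneg_of_le (fun k => mul_nonneg (hμ0 k) (hA0 _ _))
      (fun k => ?_) hμ1.summable
    calc μ k * convPow p k (s + 1) ≤ μ k * 1 :=
          mul_le_mul_of_nonneg_left (hA1 _ _) (hμ0 k)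
      _ = μ k := mul_one _
  rw [Summable.tsum_eq_zero_add hsum]
  have hz : μ 0 * convPow p 0 (s + 1) = 0 := by simp [convPow]
  rw [hz, zero_add, ← tsum_mul_left]
  refine tsum_congr fun k => ?_
  have hk := convPow_key p k (s + 1)
  have htrim : ∑ m ∈ Finset.range (s + 1 + 1),
        convPow p k m * ((s + 1 - m : ℕ) : ℝ) * p (s + 1 - m)
      = ∑ m ∈ Finset.range (s + 1),
        convPow p k m * (((s - m : ℕ) : ℝ) + 1) * p (s - m + 1) := by
    rw [Finset.sum_range_succ]
    simp only [Nat.sub_self, Nat.cast_zero, mul_zero, zero_mul, add_zero]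
    refine Finset.sum_congr rfl fun m hm => ?_
    have hm' : m ≤ s := Nat.lt_succ_iff.mp (Finset.mem_range.mp hm)
    have e1 : s + 1 - m = (s - m) + 1 := by omega
    rw [e1]
    push_cast
    ring
  calc ((s : ℝ) + 1) * (μ (k + 1) * convPow p (k + 1) (s + 1))
      = μ (k + 1) * (((s + 1 : ℕ) : ℝ) * convPow p (k + 1) (s + 1)) := by push_cast; ring
    _ = μ (k + 1) * (((k : ℝ) + 1) * ∑ m ∈ Finset.range (s + 1 + 1),
          convPow p k m * ((s + 1 - m : ℕ) : ℝ) * p (s + 1 - m)) := by rw [hk]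
    _ = ((k : ℝ) + 1) * μ (k + 1) * ∑ m ∈ Finset.range (s + 1),
          convPow p k m * (((s - m : ℕ) : ℝ) + 1) * p (s - m + 1) := by rw [htrim]; ring
end

section
/- Let N be concentrated on {0,1,...,K} (K = ∞ allowed) with μ_k = P(N=k) > 0 for k ≤ K satisfying Panjer's recursion (k+1)μ_{k+1}/μ_k = a + b k for all 0 ≤ k ≤ K (with μ_{K+1}=0), and let S_N = ∑_{j=1}^N X_j where X_j are i.i.d. ℤ≥0-valued with pmf (p_k), independent of N, and E S_N < ∞. Then for every bounded g: ℤ≥0 → ℝ, E[ ∑_{l=1}^∞ (a l + b S_N) g(S_N + l) p_l - (1 - b p₀) S_N g(S_N) ] = 0. -/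
open PowerSeries Finset

noncomputable section SteinAux

namespace SteinAux

lemma coeff_mul_range (φ ψ : PowerSeries ℝ) (s : ℕ) :
    PowerSeries.coeff (R := ℝ) s (φ * ψ) =
      ∑ m ∈ Finset.range (s + 1), PowerSeries.coeff (R := ℝ) m φ * PowerSeries.coeff (R := ℝ) (s - m) ψ := by
  rw [PowerSeries.coeff_mul, Finset.Nat.sum_antidiagonal_eq_sum_range_succ_mk]

variable {a b : ℝ} {μ p : ℕ → ℝ}

lemma coeff_pow_nonneg (hp : ∀ k, 0 ≤ p k) (k s : ℕ) :
    0 ≤ PowerSeries.coeff (R := ℝ) s (PowerSeries.mk p ^ k) := by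
  induction k generalizing s with
  | zero => simp [PowerSeries.coeff_one]; positivity
  | succ k ih =>
    rw [pow_succ, coeff_mul_range]
    exact Finset.sum_nonneg fun m _ => mul_nonneg (ih m) (by simp [hp])

lemma hasSum_coeff_pow (hp : ∀ k, 0 ≤ p k) (hp1 : HasSum p 1) (k : ℕ) :
    HasSum (fun s => PowerSeries.coeff (R := ℝ) s (PowerSeries.mk p ^ k)) 1 := by
  induction k with
  | zero =>
    have : (fun s => PowerSeries.coeff (R := ℝ) s (PowerSeries.mk p ^ 0))
        = fun s => if s = 0 then (1:ℝ) else 0 := by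
      funext s; simp [PowerSeries.coeff_one]
    rw [this]
    simpa using hasSum_ite_eq (0:ℕ) (1:ℝ)
  | succ k ih =>
    have hnorm : Summable fun s => ‖PowerSeries.coeff (R := ℝ) s (PowerSeries.mk p ^ k)‖ := by
      refine ih.summable.congr fun s => ?_
      rw [Real.norm_eq_abs, abs_of_nonneg (coeff_pow_nonneg hp k s)]
    have hpnorm : Summable fun s => ‖p s‖ := by
      refine hp1.summable.congr fun s => ?_
      rw [Real.norm_eq_abs, abs_of_nonneg (hp s)]
    have hs : Summable fun n => ∑ kl ∈ Finset.HasAntidiagonal.antidiagonal n,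
        PowerSeries.coeff (R := ℝ) kl.1 (PowerSeries.mk p ^ k) * p kl.2 :=
      (summable_norm_sum_mul_antidiagonal_of_summable_norm hnorm hpnorm).of_norm
    have heq := tsum_mul_tsum_eq_tsum_sum_antidiagonal_of_summable_norm hnorm hpnorm
    rw [ih.tsum_eq, hp1.tsum_eq, one_mul] at heq
    have : (fun s => PowerSeries.coeff (R := ℝ) s (PowerSeries.mk p ^ (k+1)))
        = fun n => ∑ kl ∈ Finset.HasAntidiagonal.antidiagonal n,
            PowerSeries.coeff (R := ℝ) kl.1 (PowerSeries.mk p ^ k) * p kl.2 := by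
      funext n
      rw [pow_succ, PowerSeries.coeff_mul]
      exact Finset.sum_congr rfl fun x _ => by rw [PowerSeries.coeff_mk]
    rw [this]
    exact heq ▸ hs.hasSum

lemma coeff_pow_le_one (hp : ∀ k, 0 ≤ p k) (hp1 : HasSum p 1) (k s : ℕ) :
    PowerSeries.coeff (R := ℝ) s (PowerSeries.mk p ^ k) ≤ 1 :=
  le_hasSum (hasSum_coeff_pow hp hp1 k) s fun j _ => coeff_pow_nonneg hp k j

/-- Key identity: `s * coeff s (P^(k+1)) = (k+1) * coeff s (Q * P^k)` where `Q = mk (l * p l)`. -/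
lemma key_deriv (p : ℕ → ℝ) (k s : ℕ) :
    (s : ℝ) * PowerSeries.coeff (R := ℝ) s (PowerSeries.mk p ^ (k+1)) =
      ((k : ℝ) + 1) * PowerSeries.coeff (R := ℝ) s
        (PowerSeries.mk (fun t => (t : ℝ) * p t) * PowerSeries.mk p ^ k) := by
  induction k generalizing s with
  | zero => simp [PowerSeries.coeff_mk, mul_comm]
  | succ k ih =>
    have h1 : (s : ℝ) * PowerSeries.coeff (R := ℝ) s (PowerSeries.mk p ^ (k+2)) =
        ∑ x ∈ Finset.HasAntidiagonal.antidiagonal s,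
          (((x.1 : ℝ) * PowerSeries.coeff (R := ℝ) x.1 (PowerSeries.mk p ^ (k+1))) * p x.2
            + PowerSeries.coeff (R := ℝ) x.1 (PowerSeries.mk p ^ (k+1)) * ((x.2 : ℝ) * p x.2)) := by
      rw [pow_succ, PowerSeries.coeff_mul, Finset.mul_sum]
      refine Finset.sum_congr rfl fun x hx => ?_
      have hxs : x.1 + x.2 = s := Finset.HasAntidiagonal.mem_antidiagonal.mp hx
      have : (s : ℝ) = (x.1 : ℝ) + x.2 := by rw [← hxs]; push_cast; ring
      rw [this, PowerSeries.coeff_mk]; ring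
    rw [h1, Finset.sum_add_distrib]
    have h2 : ∑ x ∈ Finset.HasAntidiagonal.antidiagonal s,
        ((x.1 : ℝ) * PowerSeries.coeff (R := ℝ) x.1 (PowerSeries.mk p ^ (k+1))) * p x.2
        = ((k:ℝ)+1) * PowerSeries.coeff (R := ℝ) s
            ((PowerSeries.mk (fun t => (t : ℝ) * p t) * PowerSeries.mk p ^ k)
              * PowerSeries.mk p) := by
      rw [PowerSeries.coeff_mul, Finset.mul_sum]
      refine Finset.sum_congr rfl fun x _ => ?_
      rw [ih x.1, PowerSeries.coeff_mk]; ring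
    have h3 : ∑ x ∈ Finset.HasAntidiagonal.antidiagonal s,
        PowerSeries.coeff (R := ℝ) x.1 (PowerSeries.mk p ^ (k+1)) * ((x.2 : ℝ) * p x.2)
        = PowerSeries.coeff (R := ℝ) s
            (PowerSeries.mk p ^ (k+1) * PowerSeries.mk (fun t => (t:ℝ) * p t)) := by
      rw [PowerSeries.coeff_mul]
      exact Finset.sum_congr rfl fun x _ => by rw [PowerSeries.coeff_mk]
    rw [h2, h3]
    have e1 : (PowerSeries.mk (fun t => (t : ℝ) * p t) * PowerSeries.mk p ^ k) * PowerSeries.mk p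
        = PowerSeries.mk (fun t => (t : ℝ) * p t) * PowerSeries.mk p ^ (k+1) := by ring
    have e2 : PowerSeries.mk p ^ (k+1) * PowerSeries.mk (fun t => (t:ℝ) * p t)
        = PowerSeries.mk (fun t => (t : ℝ) * p t) * PowerSeries.mk p ^ (k+1) := by ring
    rw [e1, e2]; push_cast; ring

lemma summable_base (hμ0 : ∀ k, 0 ≤ μ k) (hμ1 : HasSum μ 1)
    (hp0 : ∀ k, 0 ≤ p k) (hp1 : HasSum p 1) (j : ℕ) :
    Summable fun k => μ k * PowerSeries.coeff (R := ℝ) j (PowerSeries.mk p ^ k) := by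
  refine Summable.of_nonneg_of_le
    (fun k => mul_nonneg (hμ0 k) (coeff_pow_nonneg hp0 k j))
    (fun k => ?_) hμ1.summable
  calc μ k * PowerSeries.coeff (R := ℝ) j (PowerSeries.mk p ^ k) ≤ μ k * 1 :=
        mul_le_mul_of_nonneg_left (coeff_pow_le_one hp0 hp1 k j) (hμ0 k)
    _ = μ k := mul_one _

lemma sub2 (p : ℕ → ℝ) (k s : ℕ) :
    ∑ l ∈ Finset.range (s + 1), p l * (((s - l : ℕ) : ℝ) *
        PowerSeries.coeff (R := ℝ) (s - l) (PowerSeries.mk p ^ k)) =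
      (k : ℝ) * PowerSeries.coeff (R := ℝ) s
        (PowerSeries.mk (fun t => (t : ℝ) * p t) * PowerSeries.mk p ^ k) := by
  cases k with
  | zero =>
    simp only [pow_zero, PowerSeries.coeff_one, Nat.cast_zero, zero_mul]
    refine Finset.sum_eq_zero fun l _ => ?_
    by_cases h : s - l = 0 <;> simp [h]
  | succ k =>
    have : ∀ l ∈ Finset.range (s + 1),
        p l * (((s - l : ℕ) : ℝ) * PowerSeries.coeff (R := ℝ) (s - l) (PowerSeries.mk p ^ (k+1)))
        = ((k : ℝ) + 1) * (p l * PowerSeries.coeff (R := ℝ) (s - l)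
            (PowerSeries.mk (fun t => (t : ℝ) * p t) * PowerSeries.mk p ^ k)) := by
      intro l _
      rw [key_deriv p k (s - l)]; ring
    rw [Finset.sum_congr rfl this, ← Finset.mul_sum]
    have : ∑ l ∈ Finset.range (s + 1), p l * PowerSeries.coeff (R := ℝ) (s - l)
            (PowerSeries.mk (fun t => (t : ℝ) * p t) * PowerSeries.mk p ^ k)
        = PowerSeries.coeff (R := ℝ) s (PowerSeries.mk p *
            (PowerSeries.mk (fun t => (t : ℝ) * p t) * PowerSeries.mk p ^ k)) := by
      rw [coeff_mul_range]
      exact Finset.sum_congr rfl fun l _ => by rw [PowerSeries.coeff_mk]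
    rw [this]
    have : PowerSeries.mk p * (PowerSeries.mk (fun t => (t : ℝ) * p t) * PowerSeries.mk p ^ k)
        = PowerSeries.mk (fun t => (t : ℝ) * p t) * PowerSeries.mk p ^ (k+1) := by ring
    rw [this]; push_cast; ring

/-- The pointwise Panjer identity for the compound pmf. -/
lemma ppoint (hμ0 : ∀ k, 0 ≤ μ k) (hμ1 : HasSum μ 1)
    (hpanjer : ∀ k : ℕ, ((k : ℝ) + 1) * μ (k + 1) = (a + b * k) * μ k)
    (hp0 : ∀ k, 0 ≤ p k) (hp1 : HasSum p 1) (s : ℕ) :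
    ∑ l ∈ Finset.range (s + 1),
        (a * l + b * ((s - l : ℕ) : ℝ)) * p l *
          (∑' k : ℕ, μ k * PowerSeries.coeff (R := ℝ) (s - l) (PowerSeries.mk p ^ k)) =
      (s : ℝ) * ∑' k : ℕ, μ k * PowerSeries.coeff (R := ℝ) s (PowerSeries.mk p ^ k) := by
  set P := PowerSeries.mk p with hP
  set Q := PowerSeries.mk (fun t => (t : ℝ) * p t) with hQ
  set W : ℕ → ℝ := fun k => μ k * ((a + b * k) * PowerSeries.coeff (R := ℝ) s (Q * P ^ k)) with hW
  set R : ℕ → ℝ := fun k => μ k * ((s : ℝ) * PowerSeries.coeff (R := ℝ) s (P ^ k)) with hR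
  have hRW : ∀ k, R (k + 1) = W k := by
    intro k
    simp only [hR, hW]
    rw [key_deriv p k s]
    have : μ (k+1) * (((k:ℝ)+1) * PowerSeries.coeff (R := ℝ) s (Q * P ^ k))
        = (((k:ℝ)+1) * μ (k+1)) * PowerSeries.coeff (R := ℝ) s (Q * P ^ k) := by ring
    rw [this, hpanjer k]; ring
  have hRsummable : Summable R := by
    refine Summable.of_nonneg_of_le
      (fun k => mul_nonneg (hμ0 k) (mul_nonneg (Nat.cast_nonneg s) (coeff_pow_nonneg hp0 k s)))
      (fun k => ?_) (hμ1.summable.mul_left (s : ℝ))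
    calc μ k * ((s:ℝ) * PowerSeries.coeff (R := ℝ) s (P ^ k))
        ≤ μ k * ((s:ℝ) * 1) := by
          apply mul_le_mul_of_nonneg_left _ (hμ0 k)
          exact mul_le_mul_of_nonneg_left (coeff_pow_le_one hp0 hp1 k s) (Nat.cast_nonneg s)
      _ = (s:ℝ) * μ k := by ring
  have hRHS : (s : ℝ) * ∑' k : ℕ, μ k * PowerSeries.coeff (R := ℝ) s (P ^ k) = ∑' k, W k := by
    rw [← tsum_mul_left]
    have : (fun k => (s:ℝ) * (μ k * PowerSeries.coeff (R := ℝ) s (P ^ k))) = R := by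
      funext k; simp only [hR]; ring
    rw [this, Summable.tsum_eq_zero_add hRsummable]
    have hR0 : R 0 = 0 := by
      simp only [hR, pow_zero, PowerSeries.coeff_one]
      by_cases h : s = 0 <;> simp [h]
    rw [hR0, zero_add]
    exact tsum_congr hRW
  rw [hRHS]
  have hterm : ∀ l ∈ Finset.range (s+1),
      (a * l + b * ((s - l : ℕ) : ℝ)) * p l *
          (∑' k : ℕ, μ k * PowerSeries.coeff (R := ℝ) (s - l) (P ^ k))
      = ∑' k : ℕ, (a * l + b * ((s - l : ℕ) : ℝ)) * p l *
          (μ k * PowerSeries.coeff (R := ℝ) (s - l) (P ^ k)) := by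
    intro l _
    exact (tsum_mul_left).symm
  rw [Finset.sum_congr rfl hterm]
  rw [← Summable.tsum_finsetSum (fun l _ => Summable.mul_left _ (summable_base hμ0 hμ1 hp0 hp1 (s - l)))]
  refine tsum_congr fun k => ?_
  have split : ∑ l ∈ Finset.range (s+1), (a * l + b * ((s - l : ℕ) : ℝ)) * p l *
      (μ k * PowerSeries.coeff (R := ℝ) (s - l) (P ^ k))
      = μ k * (a * ∑ l ∈ Finset.range (s+1), ((l:ℝ) * p l) * PowerSeries.coeff (R := ℝ) (s - l) (P ^ k)
        + b * ∑ l ∈ Finset.range (s+1),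
            p l * (((s - l : ℕ):ℝ) * PowerSeries.coeff (R := ℝ) (s-l) (P ^ k))) := by
    rw [mul_add, Finset.mul_sum, Finset.mul_sum, Finset.mul_sum, Finset.mul_sum,
      ← Finset.sum_add_distrib]
    exact Finset.sum_congr rfl fun l _ => by ring
  rw [split, sub2 p k s]
  have h1 : ∑ l ∈ Finset.range (s+1), ((l:ℝ) * p l) * PowerSeries.coeff (R := ℝ) (s - l) (P ^ k)
      = PowerSeries.coeff (R := ℝ) s (Q * P ^ k) := by
    rw [coeff_mul_range]
    exact Finset.sum_congr rfl fun l _ => by rw [hQ, PowerSeries.coeff_mk]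
  rw [h1]
  simp only [hW]; ring

end SteinAux

end SteinAux

open SteinAux

lemma convPow_eq (p : ℕ → ℝ) (k s : ℕ) :
    convPow p k s = PowerSeries.coeff (R := ℝ) s (PowerSeries.mk p ^ k) := by
  induction k generalizing s with
  | zero => simp [convPow, PowerSeries.coeff_one]
  | succ k ih => rw [pow_succ, SteinAux.coeff_mul_range]; simp [convPow, ih]

set_option maxHeartbeats 2000000 in
/-- Stein identity for compound distributions with counting distribution satisfying
Panjer's recursion `(k+1)μ_{k+1} = (a + bk)μ_k`: for `S_N` with pmf
`π_j = ∑_k μ_k p_{k,j}`, finite mean, and bounded `g`,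
`E[∑_{l≥1} (a l + b S_N) g(S_N + l) p_l - (1 - b p₀) S_N g(S_N)] = 0`. -/
theorem stein_operator_panjer_compound (a b : ℝ) (μ p : ℕ → ℝ)
    (hμ0 : ∀ k, 0 ≤ μ k) (hμ1 : HasSum μ 1)
    (hpanjer : ∀ k : ℕ, ((k : ℝ) + 1) * μ (k + 1) = (a + b * k) * μ k)
    (hp0 : ∀ k, 0 ≤ p k) (hp1 : HasSum p 1)
    (hmean : Summable (fun s : ℕ => (s : ℝ) * ∑' k : ℕ, μ k * convPow p k s))
    (g : ℕ → ℝ) (hg : ∃ C, ∀ j, |g j| ≤ C) :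
    ∑' j : ℕ, (∑' k : ℕ, μ k * convPow p k j) *
      ((∑' l : ℕ, (a * ((l : ℝ) + 1) + b * j) * g (j + (l + 1)) * p (l + 1)) -
        (1 - b * p 0) * (j : ℝ) * g j) = 0 := by
  obtain ⟨C, hC⟩ := hg
  have hC0 : 0 ≤ C := le_trans (abs_nonneg _) (hC 0)
  simp only [convPow_eq] at hmean ⊢
  set P := PowerSeries.mk p with hPdef
  set π : ℕ → ℝ := fun j => ∑' k : ℕ, μ k * PowerSeries.coeff (R := ℝ) j (P ^ k) with hπdef
  have hπfold : ∀ j, (∑' k : ℕ, μ k * PowerSeries.coeff (R := ℝ) j (P ^ k)) = π j := fun j => rfl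
  have hbase : ∀ j, Summable fun k => μ k * PowerSeries.coeff (R := ℝ) j (P ^ k) :=
    fun j => summable_base hμ0 hμ1 hp0 hp1 j
  have hπ0 : ∀ j, 0 ≤ π j := fun j =>
    tsum_nonneg fun k => mul_nonneg (hμ0 k) (coeff_pow_nonneg hp0 k j)
  have hjπ : Summable fun j : ℕ => (j : ℝ) * π j := hmean
  -- μ 0 > 0
  have hμ0pos : 0 < μ 0 := by
    rcases lt_or_eq_of_le (hμ0 0) with h | h
    · exact h
    · exfalso
      have hz : ∀ k, μ k = 0 := by
        intro k
        induction k with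
        | zero => exact h.symm
        | succ k ih =>
          have hk := hpanjer k
          rw [ih, mul_zero] at hk
          have : ((k : ℝ) + 1) ≠ 0 := by positivity
          exact (mul_eq_zero.mp hk).resolve_left this
      have : HasSum μ 0 := by
        have : μ = fun _ => (0:ℝ) := funext hz
        rw [this]; exact hasSum_zero
      exact one_ne_zero (hμ1.unique this)
  have hμ1a : μ 1 = a * μ 0 := by
    have := hpanjer 0
    push_cast at this
    linarith
  have ha : 0 ≤ a := by
    by_contra hlt
    push_neg at hlt
    have : μ 1 < 0 := by rw [hμ1a]; exact mul_neg_of_neg_of_pos hlt hμ0pos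
    exact absurd (hμ0 1) (not_le.mpr this)
  have hπ_ge : ∀ j, μ 1 * p j ≤ π j := by
    intro j
    have h1 : μ 1 * PowerSeries.coeff (R := ℝ) j (P ^ 1) ≤ π j :=
      Summable.le_tsum (hbase j) 1 fun k _ => mul_nonneg (hμ0 k) (coeff_pow_nonneg hp0 k j)
    rwa [pow_one, hPdef, PowerSeries.coeff_mk] at h1
  -- summability of the `a`-part
  have hap : Summable fun m : ℕ => a * ((m : ℝ) + 1) * p (m + 1) := by
    by_cases haz : a = 0
    · refine summable_zero.congr fun m => by simp [haz]
    · have hapos : 0 < a := lt_of_le_of_ne ha (Ne.symm haz)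
      have hμ1pos : 0 < μ 1 := by rw [hμ1a]; positivity
      have hlp : Summable fun l : ℕ => (l : ℝ) * p l := by
        refine Summable.of_nonneg_of_le
          (fun l => mul_nonneg (Nat.cast_nonneg l) (hp0 l)) (fun l => ?_)
          (hjπ.mul_left (μ 1)⁻¹)
        have h2 : μ 1 * ((l:ℝ) * p l) ≤ (l:ℝ) * π l := by
          have := mul_le_mul_of_nonneg_left (hπ_ge l) (Nat.cast_nonneg (α := ℝ) l)
          calc μ 1 * ((l:ℝ) * p l) = (l:ℝ) * (μ 1 * p l) := by ring
            _ ≤ (l:ℝ) * π l := this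
        calc (l:ℝ) * p l = (μ 1)⁻¹ * (μ 1 * ((l:ℝ) * p l)) := by
              field_simp
          _ ≤ (μ 1)⁻¹ * ((l:ℝ) * π l) :=
              mul_le_mul_of_nonneg_left h2 (inv_nonneg.mpr hμ1pos.le)
      have hshift : Summable fun m : ℕ => ((m + 1 : ℕ) : ℝ) * p (m + 1) :=
        (summable_nat_add_iff 1).mpr hlp
      refine (hshift.mul_left a).congr fun m => ?_
      push_cast; ring
  have hpshift : Summable fun m : ℕ => p (m + 1) := (summable_nat_add_iff 1).mpr hp1.summable
  -- summability of π
  have hπs : Summable π := by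
    have hG : Summable fun x : ℕ × ℕ => μ x.1 * PowerSeries.coeff (R := ℝ) x.2 (P ^ x.1) := by
      refine (summable_prod_of_nonneg ?_).mpr ⟨fun k => ?_, ?_⟩
      · intro x; exact mul_nonneg (hμ0 x.1) (coeff_pow_nonneg hp0 x.1 x.2)
      · exact ((hasSum_coeff_pow hp0 hp1 k).summable).mul_left (μ k)
      · refine hμ1.summable.congr fun k => ?_
        show μ k = ∑' y : ℕ, μ k * PowerSeries.coeff (R := ℝ) y (P ^ k)
        rw [tsum_mul_left, ((hasSum_coeff_pow hp0 hp1 k)).tsum_eq, mul_one]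
    have hH : Summable fun x : ℕ × ℕ => μ x.2 * PowerSeries.coeff (R := ℝ) x.1 (P ^ x.2) := by
      have := hG.prod_symm
      exact this.congr fun x => rfl
    have := ((summable_prod_of_nonneg
      (fun x : ℕ × ℕ => mul_nonneg (hμ0 x.2) (coeff_pow_nonneg hp0 x.2 x.1))).mp hH).2
    exact this.congr fun j => rfl
  -- the double-indexed family
  set Φ : ℕ × ℕ → ℝ := fun x =>
    π x.1 * ((a * ((x.2 : ℝ) + 1) + b * x.1) * g (x.1 + (x.2 + 1)) * p (x.2 + 1)) with hΦdef
  have hΦ : Summable Φ := by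
    set bnd : ℕ × ℕ → ℝ := fun x =>
      C * (π x.1 * (a * ((x.2 : ℝ) + 1) * p (x.2 + 1)))
        + (C * |b|) * (((x.1 : ℝ) * π x.1) * p (x.2 + 1)) with hbnddef
    have hbnd : Summable bnd := by
      refine Summable.add ?_ ?_
      · exact (Summable.mul_of_nonneg hπs hap hπ0
          (fun m => by have := hp0 (m+1); positivity)).mul_left C
      · exact (Summable.mul_of_nonneg hjπ hpshift
          (fun j => mul_nonneg (Nat.cast_nonneg j) (hπ0 j))
          (fun m => hp0 (m+1))).mul_left (C * |b|)
    refine Summable.of_abs (Summable.of_nonneg_of_le (fun x => abs_nonneg _) (fun x => ?_) hbnd)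
    obtain ⟨j, m⟩ := x
    have h1 : |Φ (j, m)| = π j * (|a * ((m:ℝ)+1) + b * j| * |g (j + (m+1))| * p (m+1)) := by
      simp only [hΦdef, abs_mul, abs_of_nonneg (hπ0 j), abs_of_nonneg (hp0 (m+1))]
    rw [h1]
    have h2 : |a * ((m:ℝ)+1) + b * (j:ℝ)| ≤ a * ((m:ℝ)+1) + |b| * (j:ℝ) := by
      refine (abs_add_le _ _).trans ?_
      rw [abs_mul, abs_mul, abs_of_nonneg ha, abs_of_nonneg (by positivity : (0:ℝ) ≤ ((m:ℝ)+1)),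
        Nat.abs_cast]
    have h3 : π j * (|a * ((m:ℝ)+1) + b * j| * |g (j + (m+1))| * p (m+1))
        ≤ π j * ((a * ((m:ℝ)+1) + |b| * (j:ℝ)) * C * p (m+1)) := by
      refine mul_le_mul_of_nonneg_left ?_ (hπ0 j)
      refine mul_le_mul_of_nonneg_right ?_ (hp0 (m+1))
      refine mul_le_mul h2 (hC _) (abs_nonneg _) ?_
      positivity
    refine h3.trans (le_of_eq ?_)
    simp only [hbnddef]; ring
  have hslice : ∀ j, Summable fun m => Φ (j, m) := fun j => hΦ.prod_factor j
  have hsum1 : Summable fun j => ∑' m, Φ (j, m) :=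
    (HasSum.prod_fiberwise hΦ.hasSum fun j => (hslice j).hasSum).summable
  -- the single-indexed family
  set h : ℕ → ℝ := fun j => π j * ((1 - b * p 0) * (j : ℝ) * g j) with hhdef
  have hsumh : Summable h := by
    refine Summable.of_abs (Summable.of_nonneg_of_le (fun j => abs_nonneg _) (fun j => ?_)
      (hjπ.mul_left (|1 - b * p 0| * C)))
    have h1 : |h j| = π j * (|1 - b * p 0| * (j:ℝ) * |g j|) := by
      simp only [hhdef, abs_mul, abs_of_nonneg (hπ0 j), Nat.abs_cast]
    rw [h1]
    calc π j * (|1 - b * p 0| * (j:ℝ) * |g j|)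
        ≤ π j * (|1 - b * p 0| * (j:ℝ) * C) := by
          refine mul_le_mul_of_nonneg_left ?_ (hπ0 j)
          refine mul_le_mul_of_nonneg_left (hC j) ?_
          positivity
      _ = |1 - b * p 0| * C * ((j:ℝ) * π j) := by ring
  -- antidiagonal sums
  have hantidiag : ∀ n : ℕ, ∑ kl ∈ Finset.HasAntidiagonal.antidiagonal n, Φ kl = h (n + 1) := by
    intro n
    set F : ℕ → ℝ := fun i =>
      (a * ((i + 1 : ℕ) : ℝ) + b * ((n - i : ℕ) : ℝ)) * p (i + 1) * π (n - i) with hFdef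
    have key := ppoint hμ0 hμ1 hpanjer hp0 hp1 (n + 1)
    rw [Finset.sum_range_succ'] at key
    simp only [Nat.succ_sub_succ_eq_sub, Nat.sub_zero, Nat.cast_zero, mul_zero, zero_add] at key
    rw [← hPdef] at key
    simp only [hπfold] at key
    -- key : ∑ i ∈ range (n+1), (a * ↑(i+1) + b * ↑(n-i)) * p (i+1) * π (n-i)
    --         + b * ↑(n+1) * p 0 * π (n+1) = ↑(n+1) * π (n+1)
    rw [Finset.Nat.sum_antidiagonal_eq_sum_range_succ_mk]
    have e1 : ∀ j ∈ Finset.range (n + 1), Φ (j, n - j) = g (n + 1) * F (n - j) := by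
      intro j hj
      have hjn : j ≤ n := by
        have := Finset.mem_range.mp hj; omega
      have hidx : j + ((n - j) + 1) = n + 1 := by omega
      simp only [hΦdef, hFdef, Nat.sub_sub_self hjn, hidx]
      push_cast
      ring
    rw [Finset.sum_congr rfl e1, ← Finset.mul_sum]
    have e2 : ∑ j ∈ Finset.range (n + 1), F (n - j) = ∑ j ∈ Finset.range (n + 1), F j := by
      have := Finset.sum_range_reflect F (n + 1)
      simpa using this
    rw [e2]
    have e3 : ∑ j ∈ Finset.range (n + 1), F j
        = ((n + 1 : ℕ) : ℝ) * π (n + 1) - b * ((n + 1 : ℕ) : ℝ) * p 0 * π (n + 1) := by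
      have hkey2 : ∑ i ∈ Finset.range (n + 1),
          (a * ((i + 1 : ℕ) : ℝ) + b * ((n - i : ℕ) : ℝ)) * p (i + 1) * π (n - i)
            + b * ((n + 1 : ℕ) : ℝ) * p 0 * π (n + 1) = ((n + 1 : ℕ) : ℝ) * π (n + 1) := by
        convert key using 2
      have : ∑ j ∈ Finset.range (n + 1), F j = ∑ i ∈ Finset.range (n + 1),
          (a * ((i + 1 : ℕ) : ℝ) + b * ((n - i : ℕ) : ℝ)) * p (i + 1) * π (n - i) := rfl
      rw [this]
      linarith [hkey2]
    rw [e3]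
    simp only [hhdef]
    push_cast
    ring
  -- now assemble
  have main1 : ∀ j : ℕ, π j *
      ((∑' l : ℕ, (a * ((l : ℝ) + 1) + b * j) * g (j + (l + 1)) * p (l + 1)) -
        (1 - b * p 0) * (j : ℝ) * g j) = (∑' m, Φ (j, m)) - h j := by
    intro j
    rw [mul_sub]
    congr 1
    exact tsum_mul_left.symm
  rw [tsum_congr main1, Summable.tsum_sub hsum1 hsumh]
  have main2 : ∑' j, ∑' m, Φ (j, m) = ∑' n, ∑ kl ∈ Finset.HasAntidiagonal.antidiagonal n, Φ kl := by
    rw [← Summable.tsum_prod hΦ]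
    conv_rhs => congr; ext n; rw [← Finset.sum_finset_coe, ← tsum_fintype (L := SummationFilter.unconditional _)]
    rw [← Finset.HasAntidiagonal.sigmaAntidiagonalEquivProd.tsum_eq Φ]
    exact Summable.tsum_sigma' (fun n => (hasSum_fintype _).summable)
      (Finset.HasAntidiagonal.sigmaAntidiagonalEquivProd.summable_iff.mpr hΦ)
  have main3 : ∑' j, h j = ∑' n, ∑ kl ∈ Finset.HasAntidiagonal.antidiagonal n, Φ kl := by
    rw [Summable.tsum_eq_zero_add hsumh]
    have h0 : h 0 = 0 := by simp [hhdef]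
    rw [h0, zero_add]
    exact (tsum_congr fun n => (hantidiag n).symm)
  rw [main2, main3, sub_self]
end

section
/- Let W = ∑_{j=2}^n X_j (1 − X_{j−1}) with X_i i.i.d. Bernoulli(p*) and a = p*(1 − p*). Then the third central moment is E(W − E W)³ = (n−1) a + (15 − 9n) a² + 4(5n − 11) a³. -/
/-- The probability of the outcome `ω` of `n` independent Bernoulli(`pstar`) trials. -/
def bernoulliSeqProb (n : ℕ) (pstar : ℝ) (ω : Fin n → Bool) : ℝ :=
  ∏ i, (if ω i then pstar else 1 - pstar)

/-- The value (0 or 1) of the `j`-th trial (0-indexed), 0 outside the range. -/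
def trialVal (n : ℕ) (ω : Fin n → Bool) (j : ℕ) : ℝ :=
  if h : j < n then (if ω ⟨j, h⟩ then 1 else 0) else 0

/-- The number of (1,1)-runs `W = ∑_{j=2}^n X_j (1 - X_{j-1})` (0-indexed:
`∑_{j=1}^{n-1} X_j (1 - X_{j-1})`). -/
def runCount (n : ℕ) (ω : Fin n → Bool) : ℝ :=
  ∑ j ∈ Finset.Ico 1 n, trialVal n ω j * (1 - trialVal n ω (j - 1))

lemma sum_split (n : ℕ) (f : (Fin (n+1) → Bool) → ℝ) :
    ∑ ω : Fin (n+1) → Bool, f ω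
      = ∑ ω : Fin n → Bool, (f (Fin.snoc ω false) + f (Fin.snoc ω true)) := by
  rw [← Equiv.sum_comp (Fin.snocEquiv (fun _ => Bool)) f, Fintype.sum_prod_type]
  simp [Fin.snocEquiv, Finset.sum_add_distrib]
  rw [add_comm]

lemma prob_snoc (n : ℕ) (p : ℝ) (ω : Fin n → Bool) (b : Bool) :
    bernoulliSeqProb (n+1) p (Fin.snoc ω b)
      = bernoulliSeqProb n p ω * (if b then p else 1-p) := by
  unfold bernoulliSeqProb
  rw [Fin.prod_univ_castSucc]
  simp

lemma trialVal_snoc (n : ℕ) (ω : Fin n → Bool) (b : Bool) (j : ℕ) (hj : j < n) :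
    trialVal (n+1) (Fin.snoc ω b) j = trialVal n ω j := by
  unfold trialVal
  rw [dif_pos hj, dif_pos (Nat.lt_succ_of_lt hj)]
  rw [show (⟨j, Nat.lt_succ_of_lt hj⟩ : Fin (n+1)) = Fin.castSucc ⟨j, hj⟩ from rfl,
    Fin.snoc_castSucc]

lemma trialVal_snoc_last (n : ℕ) (ω : Fin n → Bool) (b : Bool) :
    trialVal (n+1) (Fin.snoc ω b) n = if b then 1 else 0 := by
  unfold trialVal
  rw [dif_pos (Nat.lt_succ_self n),
    show (⟨n, Nat.lt_succ_self n⟩ : Fin (n+1)) = Fin.last n from rfl, Fin.snoc_last]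

lemma trialVal_last (m : ℕ) (ω : Fin (m+1) → Bool) :
    trialVal (m+1) ω m = if ω (Fin.last m) then 1 else 0 := by
  unfold trialVal
  rw [dif_pos (Nat.lt_succ_self m)]
  rfl

lemma runCount_snoc (n : ℕ) (hn : 1 ≤ n) (ω : Fin n → Bool) (b : Bool) :
    runCount (n+1) (Fin.snoc ω b)
      = runCount n ω + (if b then 1 else 0) * (1 - trialVal n ω (n-1)) := by
  unfold runCount
  rw [Finset.sum_Ico_succ_top hn]
  congr 1
  · apply Finset.sum_congr rfl
    intro j hj
    simp only [Finset.mem_Ico] at hj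
    rw [trialVal_snoc n ω b j hj.2, trialVal_snoc n ω b (j-1) (by omega)]
  · rw [trialVal_snoc_last, trialVal_snoc n ω b (n-1) (by omega)]

/-- conditional raw moment: `n+1` trials, last bit equal to `b`. -/
def brMom (p : ℝ) (k n : ℕ) (b : Bool) : ℝ :=
  ∑ ω : Fin (n+1) → Bool,
    if ω (Fin.last n) = b then bernoulliSeqProb (n+1) p ω * runCount (n+1) ω ^ k else 0

lemma brMom_succ_false (p : ℝ) (k n : ℕ) :
    brMom p k (n+1) false = (1-p) * (brMom p k n true + brMom p k n false) := by
  unfold brMom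
  rw [sum_split]
  simp only [Finset.mul_sum, ← Finset.sum_add_distrib]
  apply Finset.sum_congr rfl
  intro ω _
  rw [prob_snoc, prob_snoc, runCount_snoc (n+1) (by omega), runCount_snoc (n+1) (by omega)]
  simp only [Fin.snoc_last, Nat.add_sub_cancel, trialVal_last]
  cases h : ω (Fin.last n) <;> simp [h] <;> ring

lemma brMom_succ_true0 (p : ℝ) (n : ℕ) :
    brMom p 0 (n+1) true = p * (brMom p 0 n true + brMom p 0 n false) := by
  unfold brMom
  rw [sum_split]
  simp only [Finset.mul_sum, ← Finset.sum_add_distrib]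
  apply Finset.sum_congr rfl
  intro ω _
  rw [prob_snoc, prob_snoc]
  simp only [Fin.snoc_last]
  cases h : ω (Fin.last n) <;> simp [h] <;> ring

lemma brMom_succ_true1 (p : ℝ) (n : ℕ) :
    brMom p 1 (n+1) true
      = p * (brMom p 1 n true + brMom p 1 n false + brMom p 0 n false) := by
  unfold brMom
  rw [sum_split]
  simp only [Finset.mul_sum, ← Finset.sum_add_distrib]
  apply Finset.sum_congr rfl
  intro ω _
  rw [prob_snoc, prob_snoc, runCount_snoc (n+1) (by omega), runCount_snoc (n+1) (by omega)]
  simp only [Fin.snoc_last, Nat.add_sub_cancel, trialVal_last]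
  cases h : ω (Fin.last n) <;> simp [h] <;> ring

lemma brMom_succ_true2 (p : ℝ) (n : ℕ) :
    brMom p 2 (n+1) true
      = p * (brMom p 2 n true + brMom p 2 n false + 2 * brMom p 1 n false
          + brMom p 0 n false) := by
  unfold brMom
  rw [sum_split]
  simp only [Finset.mul_sum, ← Finset.sum_add_distrib]
  apply Finset.sum_congr rfl
  intro ω _
  rw [prob_snoc, prob_snoc, runCount_snoc (n+1) (by omega), runCount_snoc (n+1) (by omega)]
  simp only [Fin.snoc_last, Nat.add_sub_cancel, trialVal_last]
  cases h : ω (Fin.last n) <;> simp [h] <;> ring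

lemma brMom_succ_true3 (p : ℝ) (n : ℕ) :
    brMom p 3 (n+1) true
      = p * (brMom p 3 n true + brMom p 3 n false + 3 * brMom p 2 n false
          + 3 * brMom p 1 n false + brMom p 0 n false) := by
  unfold brMom
  rw [sum_split]
  simp only [Finset.mul_sum, ← Finset.sum_add_distrib]
  apply Finset.sum_congr rfl
  intro ω _
  rw [prob_snoc, prob_snoc, runCount_snoc (n+1) (by omega), runCount_snoc (n+1) (by omega)]
  simp only [Fin.snoc_last, Nat.add_sub_cancel, trialVal_last]
  cases h : ω (Fin.last n) <;> simp [h] <;> ring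

lemma brMom_zero (p : ℝ) (k : ℕ) (b : Bool) :
    brMom p k 0 b = (if b then p else 1-p) * (0:ℝ)^k := by
  unfold brMom
  rw [sum_split 0]
  rw [Finset.univ_unique, Finset.sum_singleton]
  rw [prob_snoc, prob_snoc]
  have hrc : ∀ ω : Fin 1 → Bool, runCount 1 ω = 0 := by
    intro ω; simp [runCount]
  have hpr : ∀ ω : Fin 0 → Bool, bernoulliSeqProb 0 p ω = 1 := by
    intro ω; simp [bernoulliSeqProb]
  simp only [show (0:Fin 1) = Fin.last 0 from rfl, Fin.snoc_last, hrc, hpr, one_mul]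
  cases b <;> simp

/-- closed forms, with `t = m+1` the number of trials, valid for `m ≥ 3`. -/
def cT (p t : ℝ) : Fin 4 → ℝ
  | 0 => p
  | 1 => p + (t-3)*p^2 + (2-t)*p^3
  | 2 => p + (3*t-9)*p^2 + (t^2-12*t+26)*p^3 + (-2*t^2+16*t-30)*p^4 + (t^2-7*t+12)*p^5
  | 3 => p + (7*t-21)*p^2 + (6*t^2-61*t+134)*p^3 + (t^3-30*t^2+203*t-390)*p^4
      + (-3*t^3+57*t^2-324*t+576)*p^5 + (3*t^3-48*t^2+249*t-420)*p^6
      + (-t^3+15*t^2-74*t+120)*p^7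

def cF (p t : ℝ) : Fin 4 → ℝ
  | 0 => 1-p
  | 1 => (t-2)*p + (4-2*t)*p^2 + (t-2)*p^3
  | 2 => (t-2)*p + (t^2-9*t+16)*p^2 + (-3*t^2+22*t-38)*p^3 + (3*t^2-21*t+36)*p^4
      + (-t^2+7*t-12)*p^5
  | 3 => (t-2)*p + (3*t^2-23*t+40)*p^2 + (t^3-24*t^2+138*t-230)*p^3
      + (-4*t^3+69*t^2-359*t+588)*p^4 + (6*t^3-93*t^2+465*t-756)*p^5
      + (-4*t^3+60*t^2-296*t+480)*p^6 + (t^3-15*t^2+74*t-120)*p^7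

lemma brMom_closed (p : ℝ) : ∀ m : ℕ, 3 ≤ m →
    (brMom p 0 m true = cT p ((m:ℝ)+1) 0 ∧ brMom p 0 m false = cF p ((m:ℝ)+1) 0)
    ∧ (brMom p 1 m true = cT p ((m:ℝ)+1) 1 ∧ brMom p 1 m false = cF p ((m:ℝ)+1) 1)
    ∧ (brMom p 2 m true = cT p ((m:ℝ)+1) 2 ∧ brMom p 2 m false = cF p ((m:ℝ)+1) 2)
    ∧ (brMom p 3 m true = cT p ((m:ℝ)+1) 3 ∧ brMom p 3 m false = cF p ((m:ℝ)+1) 3) := by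
  intro m hm
  induction m with
  | zero => omega
  | succ k ih =>
    rcases Nat.lt_or_ge k 3 with hk | hk
    · -- base case : k + 1 = 3, i.e. k = 2
      have hk2 : k = 2 := by omega
      subst hk2
      refine ⟨⟨?_, ?_⟩, ⟨?_, ?_⟩, ⟨?_, ?_⟩, ?_, ?_⟩
      all_goals simp only [brMom_succ_false, brMom_succ_true0, brMom_succ_true1,
        brMom_succ_true2, brMom_succ_true3, brMom_zero, cT, cF, reduceIte]
      all_goals push_cast
      all_goals ring
    · obtain ⟨⟨h0t, h0f⟩, ⟨h1t, h1f⟩, ⟨h2t, h2f⟩, ⟨h3t, h3f⟩⟩ := ih hk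
      refine ⟨⟨?_, ?_⟩, ⟨?_, ?_⟩, ⟨?_, ?_⟩, ?_, ?_⟩
      all_goals simp only [brMom_succ_false, brMom_succ_true0, brMom_succ_true1,
        brMom_succ_true2, brMom_succ_true3, h0t, h0f, h1t, h1f, h2t, h2f, h3t, h3f, cT, cF]
      all_goals push_cast
      all_goals ring

lemma expandLem (m : ℕ) (p μ : ℝ) :
    (∑ ω : Fin (m+1) → Bool,
        bernoulliSeqProb (m+1) p ω * (runCount (m+1) ω - μ) ^ 3)
      = brMom p 3 m true + brMom p 3 m false
        - 3*μ*brMom p 2 m true - 3*μ*brMom p 2 m false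
        + 3*μ^2*brMom p 1 m true + 3*μ^2*brMom p 1 m false
        - μ^3*brMom p 0 m true - μ^3*brMom p 0 m false := by
  simp only [brMom, Finset.mul_sum, ← Finset.sum_add_distrib, ← Finset.sum_sub_distrib]
  apply Finset.sum_congr rfl
  intro ω _
  cases h : ω (Fin.last m) <;> simp [h] <;> ring


/-- Third central moment of the number of (1,1)-runs in `n` i.i.d.
Bernoulli(`p*`) trials: `E(W - EW)³ = (n-1)a + (15-9n)a² + 4(5n-11)a³`,
where `a = p*(1-p*)`. -/
theorem runs_third_central_moment (n : ℕ) (hn : 3 ≤ n) (pstar a : ℝ)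
    (hp : pstar ∈ Set.Ioo (0 : ℝ) 1) (ha : a = pstar * (1 - pstar)) :
    (∑ ω : Fin n → Bool, bernoulliSeqProb n pstar ω *
        (runCount n ω - ((n : ℝ) - 1) * a) ^ 3)
      = ((n : ℝ) - 1) * a + (15 - 9 * (n : ℝ)) * a ^ 2
        + 4 * (5 * (n : ℝ) - 11) * a ^ 3 := by
  obtain ⟨m, rfl⟩ : ∃ m, n = m + 1 := ⟨n - 1, by omega⟩
  have hm : 2 ≤ m := by omega
  rw [expandLem m pstar (((((m+1 : ℕ)) : ℝ) - 1) * a)]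
  rcases eq_or_lt_of_le hm with hm2 | hm3
  · -- n = 3
    rw [← hm2]
    simp only [brMom_succ_false, brMom_succ_true0, brMom_succ_true1,
      brMom_succ_true2, brMom_succ_true3, brMom_zero, reduceIte]
    subst ha
    push_cast
    ring
  · obtain ⟨⟨h0t, h0f⟩, ⟨h1t, h1f⟩, ⟨h2t, h2f⟩, ⟨h3t, h3f⟩⟩ := brMom_closed pstar m hm3
    rw [h0t, h0f, h1t, h1f, h2t, h2f, h3t, h3f]
    simp only [cT, cF]
    subst ha
    push_cast
    ring
end

section
/- Let Y₁ ~ Poisson(α), Y₂ ~ Binomial(M, p) be independent, λ̂ = Mp + α, and T̂ ∈ ℤ≥0 with T̂ + 1 ≥ λ̂/p. Then P(Y₁ + Y₂ ≥ T̂ + 1) ≤ exp(−λ̂ ψ(p)) where ψ(p) = (−ln p − 1)/p + 1 > 0 for p ∈ (0,1). -/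
lemma my_exp_tsum (x : ℝ) : (∑' n : ℕ, x ^ n / n.factorial) = Real.exp x := by
  rw [Real.exp_eq_exp_ℝ, NormedSpace.exp_eq_tsum_div]

/-- Exponential tail bound for the convolution of a Poisson(α) and an independent
binomial `Bi(M,p)`: with `λ̂ = Mp + α` and `T̂ + 1 ≥ λ̂/p`,
`P(Y₁ + Y₂ ≥ T̂ + 1) ≤ exp(-λ̂ ψ(p))` where `ψ(p) = (-ln p - 1)/p + 1 > 0`. -/
theorem poisson_binomial_convolution_tail_bound (α : ℝ) (hα : 0 < α)
    (M : ℕ) (hM : 0 < M) (p q : ℝ) (hp0 : 0 < p) (hp1 : p < 1) (hq : q = 1 - p)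
    (T : ℕ) (hT : ((M : ℝ) * p + α) / p ≤ (T : ℝ) + 1) :
    (∑' k : ℕ,
      ∑ i ∈ Finset.range ((T + 1 + k) + 1),
        (α ^ i * Real.exp (-α) / (Nat.factorial i)) *
          ((M.choose (T + 1 + k - i) : ℝ) * p ^ (T + 1 + k - i) *
            q ^ (M - (T + 1 + k - i))))
      ≤ Real.exp (-((M : ℝ) * p + α) * ((-Real.log p - 1) / p + 1)) ∧
    0 < (-Real.log p - 1) / p + 1 := by
  have hpne : p ≠ 0 := hp0.ne'
  have hq0 : 0 ≤ q := by rw [hq]; linarith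
  have hlogp : Real.log p < p - 1 := Real.log_lt_sub_one_of_pos hp0 hp1.ne
  have hψ : 0 < (-Real.log p - 1) / p + 1 := by
    have h2 : 0 < -Real.log p - 1 + p := by linarith
    have : (-Real.log p - 1) / p + 1 = (-Real.log p - 1 + p) / p := by field_simp
    rw [this]; exact div_pos h2 hp0
  refine ⟨?_, hψ⟩
  -- the primed sequences
  set a' : ℕ → ℝ := fun i => (α / p) ^ i / i.factorial * Real.exp (-α) with ha'def
  set b' : ℕ → ℝ := fun j => (M.choose j : ℝ) * q ^ (M - j) with hb'def
  have ha'nn : ∀ i, 0 ≤ a' i := fun i => by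
    have : (0:ℝ) ≤ α / p := le_of_lt (div_pos hα hp0)
    positivity
  have hb'nn : ∀ j, 0 ≤ b' j := fun j => by positivity
  have ha' : Summable fun i => ‖a' i‖ := by
    have : Summable fun i : ℕ => (α/p) ^ i / i.factorial * Real.exp (-α) :=
      (Real.summable_pow_div_factorial (α/p)).mul_right _
    exact this.abs.congr fun i => by rw [Real.norm_eq_abs]
  have hb' : Summable fun j => ‖b' j‖ := by
    apply summable_of_ne_finset_zero (s := Finset.range (M+1))
    intro j hj
    have : M < j := by simpa using hj
    simp [hb'def, Nat.choose_eq_zero_of_lt this]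
  have hd := hasSum_sum_range_mul_of_summable_norm ha' hb'
  set d : ℕ → ℝ := fun n => ∑ i ∈ Finset.range (n+1), a' i * b' (n - i) with hddef
  have hdsum : Summable d := hd.summable
  have hdval : (∑' n, d n) = (∑' i, a' i) * (∑' j, b' j) :=
    (tsum_mul_tsum_eq_tsum_sum_range_of_summable_norm ha' hb').symm
  have hdnn : ∀ n, 0 ≤ d n := fun n =>
    Finset.sum_nonneg fun i _ => mul_nonneg (ha'nn i) (hb'nn _)
  -- original term = p^n * d n
  have hterm : ∀ n : ℕ,
      (∑ i ∈ Finset.range (n + 1),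
        (α ^ i * Real.exp (-α) / (Nat.factorial i)) *
          ((M.choose (n - i) : ℝ) * p ^ (n - i) * q ^ (M - (n - i))))
      = p ^ n * d n := by
    intro n
    rw [hddef, Finset.mul_sum]
    apply Finset.sum_congr rfl
    intro i hi
    have hi' : i ≤ n := Nat.lt_succ_iff.mp (Finset.mem_range.mp hi)
    have hpn : p ^ n = p ^ i * p ^ (n - i) := by
      rw [← pow_add, Nat.add_sub_cancel' hi']
    rw [hpn, ha'def]
    have hpi : (p:ℝ) ^ i ≠ 0 := pow_ne_zero _ hpne
    field_simp [div_pow]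
    have hinv : p ^ i * p⁻¹ ^ i = 1 := by rw [← mul_pow, mul_inv_cancel₀ hpne, one_pow]
    simp only [hb'def]
    linear_combination (-(α ^ i * ((M.choose (n - i) : ℝ) * q ^ (M - (n - i))))) * hinv
  -- value of A and B
  have hA : (∑' i, a' i) = Real.exp (α / p) * Real.exp (-α) := by
    rw [ha'def, tsum_mul_right, my_exp_tsum]
  have hB : (∑' j, b' j) = (1 + q) ^ M := by
    rw [tsum_eq_sum (s := Finset.range (M+1)) (by
      intro j hj
      have : M < j := by simpa using hj
      simp [hb'def, Nat.choose_eq_zero_of_lt this])]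
    rw [add_pow]
    apply Finset.sum_congr rfl
    intro i hi
    simp [hb'def, mul_comm]
  -- summabilities for the tail manipulation
  have hdtail : Summable fun k => d (T + 1 + k) := by
    have := (summable_nat_add_iff (f := d) (T+1)).2 hdsum
    exact this.congr fun k => by rw [add_comm]
  have hg : Summable fun k => p ^ (T+1) * d (T + 1 + k) := hdtail.mul_left _
  have hf : Summable fun k => p ^ (T + 1 + k) * d (T + 1 + k) := by
    apply Summable.of_nonneg_of_le (fun k => by positivity)
      (fun k => ?_) hg
    apply mul_le_mul_of_nonneg_right _ (hdnn _)
    exact pow_le_pow_of_le_one hp0.le hp1.le (by omega)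
  -- rewrite LHS
  calc (∑' k : ℕ,
      ∑ i ∈ Finset.range ((T + 1 + k) + 1),
        (α ^ i * Real.exp (-α) / (Nat.factorial i)) *
          ((M.choose (T + 1 + k - i) : ℝ) * p ^ (T + 1 + k - i) *
            q ^ (M - (T + 1 + k - i))))
      = ∑' k : ℕ, p ^ (T + 1 + k) * d (T + 1 + k) := by
        exact tsum_congr fun k => hterm (T + 1 + k)
    _ ≤ ∑' k : ℕ, p ^ (T+1) * d (T + 1 + k) := by
        apply Summable.tsum_le_tsum _ hf hg
        intro k
        apply mul_le_mul_of_nonneg_right _ (hdnn _)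
        exact pow_le_pow_of_le_one hp0.le hp1.le (by omega)
    _ = p ^ (T+1) * ∑' k : ℕ, d (T + 1 + k) := tsum_mul_left
    _ ≤ p ^ (T+1) * ∑' n, d n := by
        apply mul_le_mul_of_nonneg_left _ (by positivity)
        have hsplit := Summable.sum_add_tsum_nat_add (f := d) (T+1) hdsum
        have h1 : (∑' k, d (T + 1 + k)) = ∑' k, d (k + (T+1)) :=
          tsum_congr fun k => by rw [add_comm]
        rw [h1, ← hsplit]
        have : 0 ≤ ∑ i ∈ Finset.range (T+1), d i :=
          Finset.sum_nonneg fun i _ => hdnn i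
        linarith
    _ = p ^ (T+1) * (Real.exp (α / p) * Real.exp (-α) * (1 + q) ^ M) := by
        rw [hdval, hA, hB]
    _ ≤ Real.exp (-((M : ℝ) * p + α) * ((-Real.log p - 1) / p + 1)) := by
        have h1q : (1 + q) ^ M ≤ Real.exp ((M:ℝ) * q) := by
          calc (1 + q) ^ M ≤ (Real.exp q) ^ M := by
                apply pow_le_pow_left₀ (by linarith) _ M
                have := Real.add_one_le_exp q
                linarith
            _ = Real.exp ((M:ℝ) * q) := by
                rw [← Real.exp_nat_mul]
        have hpT : p ^ (T+1) = Real.exp (((T:ℝ)+1) * Real.log p) := by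
          rw [← Real.exp_log hp0, ← Real.exp_nat_mul, Real.exp_log hp0]
          push_cast; ring_nf
        calc p ^ (T+1) * (Real.exp (α / p) * Real.exp (-α) * (1 + q) ^ M)
            ≤ p ^ (T+1) * (Real.exp (α / p) * Real.exp (-α) * Real.exp ((M:ℝ) * q)) := by
              apply mul_le_mul_of_nonneg_left _ (by positivity)
              apply mul_le_mul_of_nonneg_left h1q (by positivity)
          _ = Real.exp (((T:ℝ)+1) * Real.log p + (α / p + -α + (M:ℝ) * q)) := by
              rw [hpT, ← Real.exp_add, ← Real.exp_add, ← Real.exp_add]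
          _ ≤ Real.exp (-((M : ℝ) * p + α) * ((-Real.log p - 1) / p + 1)) := by
              apply Real.exp_le_exp.2
              have hkey : -((M : ℝ) * p + α) * ((-Real.log p - 1) / p + 1)
                  - (((T:ℝ)+1) * Real.log p + (α / p + -α + (M:ℝ) * q))
                  = (-Real.log p) * (((T:ℝ)+1) - ((M:ℝ) * p + α) / p) := by
                rw [hq]; field_simp; ring
              have hlp : Real.log p ≤ 0 := Real.log_nonpos hp0.le hp1.le
              have h2 : 0 ≤ (-Real.log p) * (((T:ℝ)+1) - ((M:ℝ) * p + α) / p) :=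
                mul_nonneg (by linarith) (by linarith)
              linarith [hkey ▸ h2]
end
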